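/- arXiv:2602.04550 — 6 statements merged into one kernel-verified Lean document; each statement's English description precedes it below -/
import Mathlib

section
/- Let M = (M_y)_{y∈Y} be a quantum measurement that is δ-quantum-differentially-private (i.e. λ_max(M_y*M_y) ≤ e^δ λ_min(M_y*M_y) for all y). Then the implementation given by the positive square roots |M_y| = √(M_y*M_y) satisfies, for every pure state ρ = |ψ⟩⟨ψ| and every outcome y, that the trace-norm distance between ρ and the post-measurement state ρ_{y} = |M_y|ρ|M_y| / Tr[ρ M_y*M_y] is at most (e^{δ/2} - 1)/(e^{δ/2} + 1) = tanh(δ/4). -/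
open Matrix BigOperators ComplexOrder

set_option maxHeartbeats 1000000

/-- The positive semidefinite square root of a positive semidefinite matrix
(the definition `Matrix.PosSemidef.sqrt` of the older Mathlib, since removed). -/
noncomputable def Matrix.PosSemidef.sqrt {n 𝕜 : Type*} [Fintype n] [RCLike 𝕜] [DecidableEq n]
    {A : Matrix n n 𝕜} (hA : A.PosSemidef) : Matrix n n 𝕜 :=
  hA.1.eigenvectorUnitary.1 * diagonal ((↑) ∘ Real.sqrt ∘ hA.1.eigenvalues) *
  (star hA.1.eigenvectorUnitary : Matrix n n 𝕜)

namespace QDP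


variable {d : ℕ}

/-- trace of U * diagonal v * star U when star U * U = 1 -/
lemma trace_UDU (U : Matrix (Fin d) (Fin d) ℂ) (hU : star U * U = 1) (v : Fin d → ℂ) :
    (U * Matrix.diagonal v * star U).trace = ∑ i, v i := by
  rw [Matrix.trace_mul_cycle, hU, Matrix.one_mul, Matrix.trace_diagonal]

lemma sq_UDU (U : Matrix (Fin d) (Fin d) ℂ) (hU : star U * U = 1) (f : Fin d → ℝ) :
    (U * Matrix.diagonal (RCLike.ofReal ∘ f) * star U) *
      (U * Matrix.diagonal (RCLike.ofReal ∘ f) * star U) =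
      U * Matrix.diagonal (RCLike.ofReal ∘ fun i => f i ^ 2) * star U := by
  have h1 : star U * U = 1 := hU
  calc (U * Matrix.diagonal (RCLike.ofReal ∘ f) * star U) *
      (U * Matrix.diagonal (RCLike.ofReal ∘ f) * star U)
      = U * (Matrix.diagonal (RCLike.ofReal ∘ f) * ((star U * U) *
          Matrix.diagonal (RCLike.ofReal ∘ f))) * star U := by
        simp only [Matrix.mul_assoc]
    _ = U * Matrix.diagonal (RCLike.ofReal ∘ fun i => f i ^ 2) * star U := by
        rw [h1, Matrix.one_mul, Matrix.diagonal_mul_diagonal]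
        have hdd : (fun i => (RCLike.ofReal ∘ f) i * (RCLike.ofReal ∘ f) i)
            = (RCLike.ofReal ∘ fun i => f i ^ 2 : Fin d → ℂ) := by
          funext i; simp [pow_two]
        rw [hdd]

/-- quadratic form through a "spectral" decomposition -/
lemma quadform_UDU (U : Matrix (Fin d) (Fin d) ℂ) (f : Fin d → ℝ) (x : Fin d → ℂ) :
    star x ⬝ᵥ (U * Matrix.diagonal (RCLike.ofReal ∘ f) * star U) *ᵥ x =
      ((∑ i, f i * Complex.normSq ((star U *ᵥ x) i) : ℝ) : ℂ) := by
  set y := star U *ᵥ x with hy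
  have h1 : (U * Matrix.diagonal (RCLike.ofReal ∘ f) * star U) *ᵥ x
      = U *ᵥ (Matrix.diagonal (RCLike.ofReal ∘ f) *ᵥ y) := by
    rw [hy, Matrix.mulVec_mulVec, Matrix.mulVec_mulVec]
  have h2 : star x ᵥ* U = star y := by
    rw [hy, Matrix.star_mulVec, Matrix.star_eq_conjTranspose, Matrix.conjTranspose_conjTranspose]
  rw [h1, Matrix.dotProduct_mulVec, h2]
  simp only [dotProduct, Matrix.mulVec_diagonal, Function.comp_apply]
  push_cast
  apply Finset.sum_congr rfl
  intro i _
  have : (starRingEnd ℂ) (y i) * y i = (Complex.normSq (y i) : ℂ) := by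
    rw [mul_comm, Complex.mul_conj]
  simp only [Pi.star_apply, RCLike.star_def]
  rw [mul_left_comm, this]
  rfl

lemma dotProduct_starU (U : Matrix (Fin d) (Fin d) ℂ) (hU : U * star U = 1) (x : Fin d → ℂ) :
    star (star U *ᵥ x) ⬝ᵥ (star U *ᵥ x) = star x ⬝ᵥ x := by
  have h2 : star x ᵥ* U = star (star U *ᵥ x) := by
    rw [Matrix.star_mulVec, Matrix.star_eq_conjTranspose, Matrix.conjTranspose_conjTranspose]
  rw [← h2, ← Matrix.dotProduct_mulVec, Matrix.mulVec_mulVec, hU, Matrix.one_mulVec]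

lemma sum_normSq (U : Matrix (Fin d) (Fin d) ℂ) (hU : U * star U = 1) (x : Fin d → ℂ)
    (hx : star x ⬝ᵥ x = 1) :
    ∑ i, Complex.normSq ((star U *ᵥ x) i) = 1 := by
  have h := dotProduct_starU U hU x
  rw [hx] at h
  have h2 : ((∑ i, Complex.normSq ((star U *ᵥ x) i) : ℝ) : ℂ) = 1 := by
    rw [← h]
    simp only [dotProduct, Pi.star_apply, RCLike.star_def]
    push_cast
    apply Finset.sum_congr rfl
    intro i _
    rw [mul_comm, Complex.mul_conj]
  exact_mod_cast h2



variable {d : ℕ}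

lemma quadform_UDU' (U : Matrix (Fin d) (Fin d) ℂ) (f : Fin d → ℝ) (x : Fin d → ℂ) :
    star x ⬝ᵥ (U * Matrix.diagonal (RCLike.ofReal ∘ f) * star U) *ᵥ x =
      ((∑ i, f i * Complex.normSq ((star U *ᵥ x) i) : ℝ) : ℂ) := by
  set y := star U *ᵥ x with hy
  have h1 : (U * Matrix.diagonal (RCLike.ofReal ∘ f) * star U) *ᵥ x
      = U *ᵥ (Matrix.diagonal (RCLike.ofReal ∘ f) *ᵥ y) := by
    rw [hy, Matrix.mulVec_mulVec, Matrix.mulVec_mulVec]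
  have h2 : star x ᵥ* U = star y := by
    rw [hy, Matrix.star_mulVec, Matrix.star_eq_conjTranspose, Matrix.conjTranspose_conjTranspose]
  rw [h1, Matrix.dotProduct_mulVec, h2]
  simp only [dotProduct, Matrix.mulVec_diagonal, Function.comp_apply]
  push_cast
  apply Finset.sum_congr rfl
  intro i _
  have : (starRingEnd ℂ) (y i) * y i = (Complex.normSq (y i) : ℂ) := by
    rw [mul_comm, Complex.mul_conj]
  simp only [Pi.star_apply, RCLike.star_def]
  rw [mul_left_comm, this]
  rfl

lemma sum_normSq' (U : Matrix (Fin d) (Fin d) ℂ) (hU : U * star U = 1) (x : Fin d → ℂ)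
    (hx : star x ⬝ᵥ x = 1) :
    ∑ i, Complex.normSq ((star U *ᵥ x) i) = 1 := by
  have h2' : star x ᵥ* U = star (star U *ᵥ x) := by
    rw [Matrix.star_mulVec, Matrix.star_eq_conjTranspose, Matrix.conjTranspose_conjTranspose]
  have h : star (star U *ᵥ x) ⬝ᵥ (star U *ᵥ x) = star x ⬝ᵥ x := by
    rw [← h2', ← Matrix.dotProduct_mulVec, Matrix.mulVec_mulVec, hU, Matrix.one_mulVec]
  rw [hx] at h
  have h2 : ((∑ i, Complex.normSq ((star U *ᵥ x) i) : ℝ) : ℂ) = 1 := by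
    rw [← h]
    simp only [dotProduct, Pi.star_apply, RCLike.star_def]
    push_cast
    apply Finset.sum_congr rfl
    intro i _
    rw [mul_comm, Complex.mul_conj]
  exact_mod_cast h2

lemma quadform_spectral (B : Matrix (Fin d) (Fin d) ℂ) (hB : B.IsHermitian) (x : Fin d → ℂ) :
    star x ⬝ᵥ B *ᵥ x =
      ((∑ i, hB.eigenvalues i *
        Complex.normSq ((star (hB.eigenvectorUnitary : Matrix (Fin d) (Fin d) ℂ) *ᵥ x) i) : ℝ) : ℂ) := by
  conv_lhs => rw [hB.spectral_theorem]
  exact quadform_UDU' _ _ _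

lemma rayleigh (B : Matrix (Fin d) (Fin d) ℂ) (hB : B.IsHermitian) (x : Fin d → ℂ)
    (hx : star x ⬝ᵥ x = 1) :
    (⨅ i, hB.eigenvalues i) ≤ (star x ⬝ᵥ B *ᵥ x).re ∧
      (star x ⬝ᵥ B *ᵥ x).re ≤ ⨆ i, hB.eigenvalues i := by
  rcases isEmpty_or_nonempty (Fin d) with hE | hE
  · exfalso; simp [dotProduct] at hx
  set U : Matrix (Fin d) (Fin d) ℂ := (hB.eigenvectorUnitary : Matrix (Fin d) (Fin d) ℂ) with hUdef
  set w : Fin d → ℝ := fun i => Complex.normSq ((star U *ᵥ x) i) with hwdef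
  have hw0 : ∀ i, 0 ≤ w i := fun i => Complex.normSq_nonneg _
  have hw1 : ∑ i, w i = 1 :=
    sum_normSq' U (Unitary.coe_mul_star_self hB.eigenvectorUnitary) x hx
  have hquad : (star x ⬝ᵥ B *ᵥ x).re = ∑ i, hB.eigenvalues i * w i := by
    rw [quadform_spectral B hB x, Complex.ofReal_re]
  rw [hquad]
  have hbdd : BddAbove (Set.range hB.eigenvalues) := Set.Finite.bddAbove (Set.finite_range _)
  have hbdd' : BddBelow (Set.range hB.eigenvalues) := Set.Finite.bddBelow (Set.finite_range _)
  constructor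
  · calc (⨅ i, hB.eigenvalues i) = ∑ i, (⨅ j, hB.eigenvalues j) * w i := by
          rw [← Finset.mul_sum, hw1, mul_one]
      _ ≤ ∑ i, hB.eigenvalues i * w i :=
          Finset.sum_le_sum fun i _ => mul_le_mul_of_nonneg_right (ciInf_le hbdd' i) (hw0 i)
  · calc ∑ i, hB.eigenvalues i * w i ≤ ∑ i, (⨆ j, hB.eigenvalues j) * w i :=
          Finset.sum_le_sum fun i _ => mul_le_mul_of_nonneg_right (le_ciSup hbdd i) (hw0 i)
      _ = ⨆ j, hB.eigenvalues j := by rw [← Finset.mul_sum, hw1, mul_one]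



variable {d : ℕ}

lemma mul_vecMulVec_mul (A C : Matrix (Fin d) (Fin d) ℂ) (u v : Fin d → ℂ) :
    A * Matrix.vecMulVec u v * C = Matrix.vecMulVec (A *ᵥ u) (v ᵥ* C) := by
  ext i j
  simp only [Matrix.mul_apply, Matrix.vecMulVec_apply, Matrix.mulVec, Matrix.vecMul,
    dotProduct, Finset.sum_mul, Finset.mul_sum]
  apply Finset.sum_congr rfl; intro k _
  apply Finset.sum_congr rfl; intro l _
  ring

lemma vecMulVec_mul_vecMulVec (u v u' v' : Fin d → ℂ) :
    Matrix.vecMulVec u v * Matrix.vecMulVec u' v' = (v ⬝ᵥ u') • Matrix.vecMulVec u v' := by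
  ext i j
  simp only [Matrix.mul_apply, Matrix.vecMulVec_apply, Matrix.smul_apply, dotProduct,
    smul_eq_mul, Finset.sum_mul, Finset.mul_sum]
  apply Finset.sum_congr rfl; intro k _
  ring

lemma trace_vecMulVec (u v : Fin d → ℂ) :
    (Matrix.vecMulVec u v).trace = v ⬝ᵥ u := by
  simp only [Matrix.trace, Matrix.diag, Matrix.vecMulVec_apply, dotProduct]
  apply Finset.sum_congr rfl; intro k _; ring

lemma smul_vecMulVec (c : ℂ) (u v : Fin d → ℂ) :
    c • Matrix.vecMulVec u v = Matrix.vecMulVec (c • u) v := by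
  ext i j
  simp only [Matrix.smul_apply, Matrix.vecMulVec_apply, Pi.smul_apply, smul_eq_mul]
  ring

lemma rank_vecMulVec_le (u v : Fin d → ℂ) : (Matrix.vecMulVec u v).rank ≤ 1 := by
  classical
  have h := Matrix.rank_vecMulVec u v
  rw [Matrix.toLin'_apply'] at h
  calc (Matrix.vecMulVec u v).rank = ((Matrix.vecMulVec u v).mulVecLin.rank).toNat := rfl
    _ ≤ (1 : Cardinal).toNat := Cardinal.toNat_le_toNat h Cardinal.one_lt_aleph0
    _ = 1 := by simp

lemma rank_sub_le (X Z : Matrix (Fin d) (Fin d) ℂ) : (X - Z).rank ≤ X.rank + Z.rank := by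
  classical
  have hle : LinearMap.range (X - Z).mulVecLin ≤
      LinearMap.range X.mulVecLin ⊔ LinearMap.range Z.mulVecLin := by
    rintro z ⟨v, rfl⟩
    have : (X - Z).mulVecLin v = X.mulVecLin v - Z.mulVecLin v := by
      simp [Matrix.mulVecLin_apply, Matrix.sub_mulVec]
    rw [this]
    exact Submodule.sub_mem _ (Submodule.mem_sup_left ⟨v, rfl⟩)
      (Submodule.mem_sup_right ⟨v, rfl⟩)
  have h1 : Module.finrank ℂ ↥(LinearMap.range (X - Z).mulVecLin) ≤ Module.finrank ℂ
      ↥(LinearMap.range X.mulVecLin ⊔ LinearMap.range Z.mulVecLin) :=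
    Submodule.finrank_mono hle
  have h2 := Submodule.finrank_sup_add_finrank_inf_eq
    (LinearMap.range X.mulVecLin) (LinearMap.range Z.mulVecLin)
  have h3 : (X - Z).rank = Module.finrank ℂ ↥(LinearMap.range (X - Z).mulVecLin) := rfl
  have h4 : X.rank = Module.finrank ℂ ↥(LinearMap.range X.mulVecLin) := rfl
  have h5 : Z.rank = Module.finrank ℂ ↥(LinearMap.range Z.mulVecLin) := rfl
  omega

lemma eig_sum_bound (n : ℕ) (f : Fin n → ℝ) (h0 : ∑ i, f i = 0) (S : ℝ)
    (hS : ∑ i, f i ^ 2 = S)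
    (hc : Fintype.card {i // f i ≠ 0} ≤ 2) :
    ∑ i, |f i| ≤ 2 * Real.sqrt (S / 2) := by
  classical
  rw [Fintype.card_subtype] at hc
  set s := Finset.univ.filter (fun i => f i ≠ 0) with hs
  have hrs : ∀ g : Fin n → ℝ, (∀ i, f i = 0 → g i = 0) → ∑ i, g i = ∑ i ∈ s, g i := by
    intro g hg
    rw [eq_comm]
    apply Finset.sum_subset (Finset.filter_subset _ _)
    intro i _ hi
    apply hg
    by_contra hne
    exact hi (Finset.mem_filter.mpr ⟨Finset.mem_univ i, hne⟩)
  have h0s : ∑ i ∈ s, f i = 0 := by rw [← hrs f (fun i h => h)]; exact h0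
  have hSs : ∑ i ∈ s, f i ^ 2 = S := by
    rw [← hrs (fun i => f i ^ 2) (fun i h => by simp [h])]; exact hS
  have habs : ∑ i, |f i| = ∑ i ∈ s, |f i| := hrs (fun i => |f i|) (fun i h => by simp [h])
  rw [habs]
  interval_cases hcard : s.card
  · -- card 0
    rw [Finset.card_eq_zero] at hcard
    simp [hcard]
    positivity
  · -- card 1
    obtain ⟨i, hi⟩ := Finset.card_eq_one.mp hcard
    exfalso
    have hmem : i ∈ s := by rw [hi]; exact Finset.mem_singleton_self i
    have : f i ≠ 0 := (Finset.mem_filter.mp hmem).2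
    rw [hi, Finset.sum_singleton] at h0s
    exact this h0s
  · -- card 2
    obtain ⟨i, j, hij, hij2⟩ := Finset.card_eq_two.mp hcard
    rw [hij2, Finset.sum_insert (by simp [hij]), Finset.sum_singleton] at h0s hSs ⊢
    have hfj : f j = -f i := by linarith
    have hS2 : S = 2 * f i ^ 2 := by rw [← hSs, hfj]; ring
    rw [hS2, hfj, abs_neg]
    rw [show 2 * f i ^ 2 / 2 = f i ^ 2 by ring, Real.sqrt_sq_eq_abs]
    linarith [abs_nonneg (f i)]


end QDP

lemma Matrix.PosSemidef.posSemidef_sqrt {d : ℕ} {A : Matrix (Fin d) (Fin d) ℂ}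
    (hA : A.PosSemidef) : hA.sqrt.PosSemidef := by
  unfold Matrix.PosSemidef.sqrt
  have hD : (Matrix.diagonal ((↑) ∘ Real.sqrt ∘ hA.1.eigenvalues : Fin d → ℂ)).PosSemidef := by
    apply Matrix.PosSemidef.diagonal
    intro i
    exact Complex.zero_le_real.mpr (Real.sqrt_nonneg _)
  have := hD.mul_mul_conjTranspose_same (hA.1.eigenvectorUnitary : Matrix (Fin d) (Fin d) ℂ)
  rw [Matrix.star_eq_conjTranspose]
  exact this

lemma Matrix.PosSemidef.sqrt_mul_self {d : ℕ} {A : Matrix (Fin d) (Fin d) ℂ}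
    (hA : A.PosSemidef) : hA.sqrt * hA.sqrt = A := by
  unfold Matrix.PosSemidef.sqrt
  refine (QDP.sq_UDU _ (Unitary.coe_star_mul_self _) (Real.sqrt ∘ hA.1.eigenvalues)).trans ?_
  have hf : (fun i => (Real.sqrt ∘ hA.1.eigenvalues) i ^ 2) = hA.1.eigenvalues :=
    funext fun i => Real.sq_sqrt (hA.eigenvalues_nonneg i)
  rw [hf]
  exact hA.1.spectral_theorem.symm

/-- A δ-quantum-differentially-private measurement, implemented via the
positive square roots |M_y| = √(M_y* M_y), is tanh(δ/4)-gentle on pure states: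
the trace-norm distance between a pure state and its post-measurement state is at
most (e^{δ/2} - 1)/(e^{δ/2} + 1). -/
theorem qdp_implies_gentle_on_pure_states
    {d : ℕ} (hd : 0 < d) {Y : Type*} [Fintype Y]
    (M : Y → Matrix (Fin d) (Fin d) ℂ)
    (hcomplete : ∑ y, (M y)ᴴ * M y = 1)
    (δ : ℝ) (hδ : 0 < δ)
    (hdp : ∀ y, (⨆ i, (Matrix.posSemidef_conjTranspose_mul_self (M y)).1.eigenvalues i)
        ≤ Real.exp δ * ⨅ i, (Matrix.posSemidef_conjTranspose_mul_self (M y)).1.eigenvalues i)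
    (ψ : Fin d → ℂ) (hψ : star ψ ⬝ᵥ ψ = 1)
    (ρ : Matrix (Fin d) (Fin d) ℂ) (hρ : ρ = Matrix.vecMulVec ψ (star ψ))
    (y : Y)
    (p : ℝ) (hp : p = (star ψ ⬝ᵥ ((M y)ᴴ * M y).mulVec ψ).re) (hp0 : 0 < p)
    (ρy : Matrix (Fin d) (Fin d) ℂ)
    (hρy : ρy = ((1 : ℂ) / (p : ℂ)) •
      ((Matrix.posSemidef_conjTranspose_mul_self (M y)).sqrt * ρ *
        (Matrix.posSemidef_conjTranspose_mul_self (M y)).sqrt))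
    (h : (ρ - ρy).IsHermitian) :
    (1 / 2 : ℝ) * ∑ i, |h.eigenvalues i| ≤
      (Real.exp (δ / 2) - 1) / (Real.exp (δ / 2) + 1) := by
    classical
  have hFin : Nonempty (Fin d) := ⟨⟨0, hd⟩⟩
  set hBp := Matrix.posSemidef_conjTranspose_mul_self (M y) with hBpdef
  set A := hBp.sqrt with hAdef
  have hApsd : A.PosSemidef := hBp.posSemidef_sqrt
  have hAH : A.IsHermitian := hApsd.1
  have hAA : A * A = (M y)ᴴ * M y := hBp.sqrt_mul_self
  -- eigen data of A
  set μ : Fin d → ℝ := hAH.eigenvalues with hμdef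
  set V : Matrix (Fin d) (Fin d) ℂ := (hAH.eigenvectorUnitary : Matrix (Fin d) (Fin d) ℂ)
    with hVdef
  have hV1 : star V * V = 1 := Unitary.coe_star_mul_self hAH.eigenvectorUnitary
  have hV2 : V * star V = 1 := Unitary.coe_mul_star_self hAH.eigenvectorUnitary
  have hspA : A = V * Matrix.diagonal (RCLike.ofReal ∘ μ) * star V := hAH.spectral_theorem
  set w : Fin d → ℝ := fun i => Complex.normSq ((star V *ᵥ ψ) i) with hwdef
  have hw0 : ∀ i, 0 ≤ w i := fun i => Complex.normSq_nonneg _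
  have hw1 : ∑ i, w i = 1 := QDP.sum_normSq' V hV2 ψ hψ
  set q : ℝ := ∑ i, μ i * w i with hqdef
  have hqA : star ψ ⬝ᵥ A *ᵥ ψ = (q : ℂ) := by
    conv_lhs => rw [hspA]
    exact QDP.quadform_UDU' V μ ψ
  have hB2 : (M y)ᴴ * M y = V * Matrix.diagonal (RCLike.ofReal ∘ fun i => μ i ^ 2) * star V := by
    rw [← hAA]
    conv_lhs => rw [hspA]
    exact QDP.sq_UDU V hV1 μ
  have hpB : star ψ ⬝ᵥ ((M y)ᴴ * M y) *ᵥ ψ = ((∑ i, μ i ^ 2 * w i : ℝ) : ℂ) := by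
    conv_lhs => rw [hB2]
    exact QDP.quadform_UDU' V _ ψ
  have hpw : p = ∑ i, μ i ^ 2 * w i := by rw [hp, hpB, Complex.ofReal_re]
  -- eigenvalue bounds of (M y)ᴴ * M y
  have hpαβ := QDP.rayleigh _ hBp.1 ψ hψ
  rw [← hp] at hpαβ
  obtain ⟨hαp, hpβ⟩ := hpαβ
  have hμ0 : ∀ i, 0 ≤ μ i := fun i => hApsd.eigenvalues_nonneg i
  have hμsq : ∀ i, (⨅ j, hBp.1.eigenvalues j) ≤ μ i ^ 2 ∧
      μ i ^ 2 ≤ ⨆ j, hBp.1.eigenvalues j := by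
    intro i
    have hv1 : star ⇑(hAH.eigenvectorBasis i) ⬝ᵥ ⇑(hAH.eigenvectorBasis i) = 1 := by
      have h1 := hAH.eigenvectorBasis.orthonormal.1 i
      have h2 : (inner ℂ (hAH.eigenvectorBasis i) (hAH.eigenvectorBasis i) : ℂ) = 1 := by
        rw [inner_self_eq_norm_sq_to_K, h1]; norm_num
      rwa [EuclideanSpace.inner_eq_star_dotProduct, dotProduct_comm] at h2
    have hv2 : ((M y)ᴴ * M y) *ᵥ ⇑(hAH.eigenvectorBasis i)
        = μ i • μ i • ⇑(hAH.eigenvectorBasis i) := by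
      rw [← hAA, ← Matrix.mulVec_mulVec, hAH.mulVec_eigenvectorBasis, Matrix.mulVec_smul,
        hAH.mulVec_eigenvectorBasis]
    have hv3 : star ⇑(hAH.eigenvectorBasis i) ⬝ᵥ ((M y)ᴴ * M y) *ᵥ ⇑(hAH.eigenvectorBasis i)
        = ((μ i ^ 2 : ℝ) : ℂ) := by
      rw [hv2, dotProduct_smul, dotProduct_smul, hv1, Complex.real_smul,
        Complex.real_smul, mul_one]
      push_cast
      ring
    have := QDP.rayleigh _ hBp.1 _ hv1
    rw [hv3, Complex.ofReal_re] at this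
    exact this
  -- positivity
  have hβpos : 0 < ⨆ j, hBp.1.eigenvalues j := lt_of_lt_of_le hp0 hpβ
  have hαpos : 0 < ⨅ j, hBp.1.eigenvalues j := by
    by_contra hcon
    push_neg at hcon
    have := hdp y
    nlinarith [Real.exp_pos δ, mul_nonpos_of_nonneg_of_nonpos (Real.exp_pos δ).le hcon]
  set a : ℝ := Real.sqrt (⨅ j, hBp.1.eigenvalues j) with hadef
  set b : ℝ := Real.sqrt (⨆ j, hBp.1.eigenvalues j) with hbdef
  have ha0 : 0 < a := Real.sqrt_pos.mpr hαpos
  have hb0 : 0 < b := Real.sqrt_pos.mpr hβpos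
  have hμab : ∀ i, a ≤ μ i ∧ μ i ≤ b := by
    intro i
    obtain ⟨h1, h2⟩ := hμsq i
    constructor
    · have := Real.sqrt_le_sqrt h1
      rwa [Real.sqrt_sq (hμ0 i)] at this
    · have := Real.sqrt_le_sqrt h2
      rwa [Real.sqrt_sq (hμ0 i)] at this
  have hab : a ≤ b := le_trans (hμab ⟨0, hd⟩).1 (hμab ⟨0, hd⟩).2
  set K : ℝ := Real.exp (δ / 2) with hKdef
  have hK1 : 1 < K := by
    rw [hKdef]
    calc (1:ℝ) = Real.exp 0 := Real.exp_zero.symm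
      _ < Real.exp (δ / 2) := Real.exp_lt_exp.mpr (by linarith)
  have hbKa : b ≤ K * a := by
    have hsq : Real.sqrt (Real.exp δ) = K := by
      rw [hKdef, show Real.exp δ = Real.exp (δ/2) * Real.exp (δ/2) by
        rw [← Real.exp_add]; ring_nf, Real.sqrt_mul_self (Real.exp_pos _).le]
    calc b ≤ Real.sqrt (Real.exp δ * ⨅ j, hBp.1.eigenvalues j) :=
          Real.sqrt_le_sqrt (hdp y)
      _ = K * a := by rw [Real.sqrt_mul (Real.exp_pos δ).le, hsq, hadef]
  -- Kantorovich
  have hpq : p ≤ (a + b) * q - a * b := by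
    have hterm : ∀ i, μ i ^ 2 * w i ≤ ((a + b) * μ i - a * b) * w i := by
      intro i
      apply mul_le_mul_of_nonneg_right _ (hw0 i)
      nlinarith [(hμab i).1, (hμab i).2]
    calc p = ∑ i, μ i ^ 2 * w i := hpw
      _ ≤ ∑ i, ((a + b) * μ i - a * b) * w i := Finset.sum_le_sum fun i _ => hterm i
      _ = (a + b) * q - a * b := by
          have e1 : ∑ i, ((a + b) * μ i - a * b) * w i
              = (a + b) * (∑ i, μ i * w i) - a * b * ∑ i, w i := by
            rw [Finset.mul_sum, Finset.mul_sum, ← Finset.sum_sub_distrib]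
            apply Finset.sum_congr rfl; intro i _; ring
          rw [e1, hw1, ← hqdef, mul_one]
  have hq4 : 4 * a * b * p ≤ ((a + b) * q) ^ 2 := by
    nlinarith [sq_nonneg ((a + b) * q - 2 * a * b), hpq, ha0, hb0, mul_pos ha0 hb0]
  have hkey : p - q ^ 2 ≤ ((b - a) / (a + b)) ^ 2 * p := by
    rw [div_pow, div_mul_eq_mul_div, le_div_iff₀ (by positivity)]
    nlinarith [hq4]
  -- matrix part
  set φ : Fin d → ℂ := A *ᵥ ψ with hφdef
  have hstarφ : star ψ ᵥ* A = star φ := by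
    rw [hφdef, Matrix.star_mulVec, hAH.eq]
  have hρyv : ρy = Matrix.vecMulVec (((1 : ℂ) / (p : ℂ)) • φ) (star φ) := by
    rw [hρy, hρ, QDP.mul_vecMulVec_mul, hstarφ, ← hφdef, QDP.smul_vecMulVec]
  have hpφ : star φ ⬝ᵥ φ = (p : ℂ) := by
    rw [hφdef]
    calc star (A *ᵥ ψ) ⬝ᵥ (A *ᵥ ψ) = (star ψ ᵥ* A) ⬝ᵥ (A *ᵥ ψ) := by
          rw [Matrix.star_mulVec, hAH.eq]
      _ = star ψ ⬝ᵥ (A * A) *ᵥ ψ := by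
          rw [← Matrix.dotProduct_mulVec, Matrix.mulVec_mulVec]
      _ = (p : ℂ) := by rw [hAA, hpB, hpw]
  have hqφ : star ψ ⬝ᵥ φ = (q : ℂ) := hqA
  have hqφ' : star φ ⬝ᵥ ψ = (q : ℂ) := by
    have hconj : star φ ⬝ᵥ ψ = star (star ψ ⬝ᵥ φ) := by
      simp only [dotProduct, star_sum, star_mul', star_star, Pi.star_apply]
      apply Finset.sum_congr rfl; intro i _; ring
    rw [hconj, hqφ, RCLike.star_def, Complex.conj_ofReal]
  have hp0' : (p : ℂ) ≠ 0 := by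
    simp only [ne_eq, Complex.ofReal_eq_zero]
    exact ne_of_gt hp0
  -- traces
  have htrρ : ρ.trace = 1 := by
    rw [hρ, QDP.trace_vecMulVec]
    exact hψ
  have htrρy : ρy.trace = 1 := by
    rw [hρyv, QDP.trace_vecMulVec, dotProduct_smul, hpφ]
    simp only [smul_eq_mul]
    field_simp
  have htr0 : (ρ - ρy).trace = 0 := by
    rw [Matrix.trace_sub, htrρ, htrρy, sub_self]
  set S : ℝ := 2 - 2 * q ^ 2 / p with hSdef
  have htrsq : ((ρ - ρy) * (ρ - ρy)).trace = (S : ℂ) := by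
    rw [Matrix.sub_mul, Matrix.mul_sub, Matrix.mul_sub, hρ, hρyv]
    rw [Matrix.trace_sub, Matrix.trace_sub, Matrix.trace_sub]
    rw [QDP.vecMulVec_mul_vecMulVec, QDP.vecMulVec_mul_vecMulVec,
      QDP.vecMulVec_mul_vecMulVec, QDP.vecMulVec_mul_vecMulVec]
    rw [Matrix.trace_smul, Matrix.trace_smul, Matrix.trace_smul, Matrix.trace_smul]
    rw [QDP.trace_vecMulVec, QDP.trace_vecMulVec, QDP.trace_vecMulVec, QDP.trace_vecMulVec]
    rw [dotProduct_smul, dotProduct_smul]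
    rw [hψ, hqφ, hqφ', hpφ]
    simp only [smul_eq_mul, hSdef]
    push_cast
    field_simp
    ring
  -- eigenvalues of the difference
  set lam : Fin d → ℝ := h.eigenvalues with hlamdef
  set W : Matrix (Fin d) (Fin d) ℂ := (h.eigenvectorUnitary : Matrix (Fin d) (Fin d) ℂ)
    with hWdef
  have hW1 : star W * W = 1 := Unitary.coe_star_mul_self h.eigenvectorUnitary
  have hspW : ρ - ρy = W * Matrix.diagonal (RCLike.ofReal ∘ lam) * star W := h.spectral_theorem
  have hsum0 : ∑ i, lam i = 0 := by
    have h1 : (ρ - ρy).trace = ∑ i, ((lam i : ℝ) : ℂ) := by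
      conv_lhs => rw [hspW]
      rw [QDP.trace_UDU W hW1]
      rfl
    rw [htr0] at h1
    have : ((∑ i, lam i : ℝ) : ℂ) = 0 := by push_cast; rw [← h1]
    exact_mod_cast this
  have hsumsq : ∑ i, lam i ^ 2 = S := by
    have h1 : ((ρ - ρy) * (ρ - ρy)).trace = ∑ i, ((lam i ^ 2 : ℝ) : ℂ) := by
      conv_lhs => rw [hspW]
      rw [QDP.sq_UDU W hW1, QDP.trace_UDU W hW1]
      rfl
    rw [htrsq] at h1
    have : ((∑ i, lam i ^ 2 : ℝ) : ℂ) = (S : ℂ) := by rw [h1]; push_cast; rfl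
    exact_mod_cast this
  -- rank bound
  have hrank : (ρ - ρy).rank ≤ 2 := by
    calc (ρ - ρy).rank ≤ ρ.rank + ρy.rank := QDP.rank_sub_le ρ ρy
      _ ≤ 1 + 1 := by
          apply add_le_add
          · rw [hρ]; exact QDP.rank_vecMulVec_le _ _
          · rw [hρyv]; exact QDP.rank_vecMulVec_le _ _
  have hcard : Fintype.card {i // lam i ≠ 0} ≤ 2 := by
    rw [← h.rank_eq_card_non_zero_eigs]
    exact hrank
  -- finale
  have habs : ∑ i, |lam i| ≤ 2 * Real.sqrt (S / 2) :=
    QDP.eig_sum_bound d lam hsum0 S hsumsq hcard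
  have hS2 : S / 2 = 1 - q ^ 2 / p := by rw [hSdef]; ring
  have hfinal : Real.sqrt (S / 2) ≤ (K - 1) / (K + 1) := by
    have hτ : S / 2 ≤ ((b - a) / (a + b)) ^ 2 := by
      rw [hS2]
      have : 1 - q ^ 2 / p = (p - q ^ 2) / p := by field_simp
      rw [this, div_le_iff₀ hp0]
      exact hkey
    calc Real.sqrt (S / 2) ≤ Real.sqrt (((b - a) / (a + b)) ^ 2) := Real.sqrt_le_sqrt hτ
      _ = (b - a) / (a + b) := Real.sqrt_sq (div_nonneg (by linarith) (by linarith))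
      _ ≤ (K - 1) / (K + 1) := by
          rw [div_le_div_iff₀ (by positivity) (by linarith)]
          nlinarith [hbKa, ha0, hb0]
  calc (1 / 2 : ℝ) * ∑ i, |lam i| ≤ (1 / 2) * (2 * Real.sqrt (S / 2)) := by linarith
    _ = Real.sqrt (S / 2) := by ring
    _ ≤ (K - 1) / (K + 1) := hfinal
end

section
/- Let M = (M_y)_{y∈Y} be a quantum measurement with positive definite Hermitian operators M_y that is α-gentle on all density matrices for some α ∈ [0,1), i.e. the trace-norm distance between any pre-measurement state and any post-measurement state is at most α. Then for every y, λ_max(M_y²) ≤ e^{4·arctanh(α)} λ_min(M_y²); in particular M is δ-quantum-differentially-private with δ = 2 log((1+α)/(1−α)). -/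
open Matrix BigOperators ComplexOrder


set_option linter.unusedSectionVars false
set_option maxHeartbeats 1000000


namespace GentleAux

variable {n : Type*} [Fintype n] [DecidableEq n]

lemma mul_vecMulVec (A : Matrix n n ℂ) (u w : n → ℂ) :
    A * vecMulVec u w = vecMulVec (A *ᵥ u) w := by
  ext i j
  simp only [Matrix.mul_apply, vecMulVec_apply, mulVec, dotProduct]
  rw [Finset.sum_mul]
  exact Finset.sum_congr rfl fun k _ => by ring

lemma vecMulVec_mul (A : Matrix n n ℂ) (u w : n → ℂ) :
    vecMulVec u w * A = vecMulVec u (w ᵥ* A) := by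
  ext i j
  simp [Matrix.mul_apply, vecMulVec_apply, vecMul, dotProduct, Finset.mul_sum,
    mul_comm, mul_assoc, mul_left_comm]

lemma vecMulVec_mulVec (u w x : n → ℂ) :
    vecMulVec u w *ᵥ x = (w ⬝ᵥ x) • u := by
  ext i
  simp only [mulVec, vecMulVec_apply, dotProduct, Pi.smul_apply, smul_eq_mul]
  rw [Finset.sum_mul]
  exact Finset.sum_congr rfl fun k _ => by ring

lemma trace_vecMulVec (u w : n → ℂ) : (vecMulVec u w).trace = u ⬝ᵥ w := by
  simp [Matrix.trace, Matrix.diag, vecMulVec_apply, dotProduct]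

lemma conjTranspose_vecMulVec (u w : n → ℂ) :
    (vecMulVec u w)ᴴ = vecMulVec (star w) (star u) := by
  ext i j
  simp [conjTranspose_apply, vecMulVec_apply, mul_comm]

lemma smul_vecMulVec_left (c : ℂ) (u w : n → ℂ) :
    vecMulVec (c • u) w = c • vecMulVec u w := by
  ext i j; simp [vecMulVec_apply, mul_assoc]

lemma smul_vecMulVec_right (c : ℂ) (u w : n → ℂ) :
    vecMulVec u (c • w) = c • vecMulVec u w := by
  ext i j; simp [vecMulVec_apply]; ring

lemma vecMulVec_mul_vecMulVec (x w y z : n → ℂ) :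
    vecMulVec x w * vecMulVec y z = (w ⬝ᵥ y) • vecMulVec x z := by
  rw [vecMulVec_mul]
  have : w ᵥ* vecMulVec y z = (w ⬝ᵥ y) • z := by
    ext j
    simp only [vecMul, vecMulVec_apply, dotProduct, Pi.smul_apply, smul_eq_mul]
    rw [Finset.sum_mul]
    exact Finset.sum_congr rfl fun k _ => by ring
  rw [this, smul_vecMulVec_right]

lemma star_dot_comm (x y : n → ℂ) : star x ⬝ᵥ y = star (star y ⬝ᵥ x) := by
  simp [dotProduct, Finset.sum_comm, mul_comm]

lemma posSemidef_vecMulVec_star (u : n → ℂ) : (vecMulVec u (star u)).PosSemidef := by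
  rw [posSemidef_iff_dotProduct_mulVec]
  constructor
  · show _ᴴ = _
    rw [conjTranspose_vecMulVec, star_star]
  · intro x
    rw [vecMulVec_mulVec, dotProduct_smul]
    have h1 : star x ⬝ᵥ u = star (star u ⬝ᵥ x) := star_dot_comm x u
    rw [smul_eq_mul, h1]
    rw [Complex.star_def, Complex.mul_conj]
    exact Complex.zero_le_real.2 (Complex.normSq_nonneg _)

lemma bessel_two (u v c : n → ℂ) (huu : star u ⬝ᵥ u = 1) (hvv : star v ⬝ᵥ v = 1)
    (huv : star u ⬝ᵥ v = 0) (hcc : star c ⬝ᵥ c = 1) :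
    Complex.normSq (star u ⬝ᵥ c) + Complex.normSq (star v ⬝ᵥ c) ≤ 1 := by
  set s : ℂ := star u ⬝ᵥ c with hs
  set t : ℂ := star v ⬝ᵥ c with ht
  have hcu : star c ⬝ᵥ u = star s := by rw [hs, ← star_dot_comm]
  have hcv : star c ⬝ᵥ v = star t := by rw [ht, ← star_dot_comm]
  have hvu : star v ⬝ᵥ u = 0 := by
    rw [star_dot_comm, ← huv]; simp [star_dot_comm v u, huv]
  set w : n → ℂ := c - s • u - t • v with hw
  have hexp : star w ⬝ᵥ w = 1 - star s * s - star t * t := by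
    rw [hw]
    simp only [star_sub, star_smul, sub_dotProduct, dotProduct_sub,
      smul_dotProduct, dotProduct_smul, huu, hvv, huv, hvu, hcc, hcu, hcv,
      ← hs, ← ht, smul_eq_mul]
    ring
  have hre : 0 ≤ (star w ⬝ᵥ w).re := by
    have : star w ⬝ᵥ w = ((∑ k, Complex.normSq (w k) : ℝ) : ℂ) := by
      simp only [dotProduct, Pi.star_apply, Complex.star_def]
      push_cast
      congr 1
      ext k
      rw [mul_comm, Complex.mul_conj]
    rw [this, Complex.ofReal_re]
    exact Finset.sum_nonneg fun k _ => Complex.normSq_nonneg _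
  rw [hexp] at hre
  have h1 : star s * s = (Complex.normSq s : ℂ) := by
    rw [Complex.star_def, mul_comm, Complex.mul_conj]
  have h2 : star t * t = (Complex.normSq t : ℂ) := by
    rw [Complex.star_def, mul_comm, Complex.mul_conj]
  rw [h1, h2] at hre
  have : (1 - (Complex.normSq s : ℂ) - (Complex.normSq t : ℂ)).re
      = 1 - Complex.normSq s - Complex.normSq t := by simp
  rw [this] at hre
  linarith

lemma diag_conj (U B : Matrix n n ℂ) (k : n) :
    (star U * B * U) k k = star (fun i => U i k) ⬝ᵥ (B *ᵥ fun i => U i k) := by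
  simp only [Matrix.mul_apply, Matrix.star_apply, mulVec, dotProduct,
    Pi.star_apply, Finset.sum_mul, Finset.mul_sum]
  rw [Finset.sum_comm]
  refine Finset.sum_congr rfl fun i _ => Finset.sum_congr rfl fun j _ => by ring

lemma trace_mul_diagonal (Z : Matrix n n ℂ) (f : n → ℂ) :
    (Z * diagonal f).trace = ∑ k, Z k k * f k := by
  simp [Matrix.trace, Matrix.diag, Matrix.mul_diagonal]

lemma smul_posSemidef {r : ℝ} (hr : 0 ≤ r) {P : Matrix n n ℂ} (hP : P.PosSemidef) :
    ((r : ℂ) • P).PosSemidef := by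
  rw [posSemidef_iff_dotProduct_mulVec]
  constructor
  · show _ᴴ = _
    rw [conjTranspose_smul, hP.1]
    congr 1
    simp [Complex.star_def, Complex.conj_ofReal]
  · intro x
    rw [smul_mulVec, dotProduct_smul, smul_eq_mul]
    exact mul_nonneg (Complex.zero_le_real.2 hr) (hP.dotProduct_mulVec_nonneg x)

end GentleAux

/-- An α-gentle measurement with positive-definite Hermitian operators
M_y satisfies λ_max(M_y²) ≤ e^{4 arctanh α} λ_min(M_y²), i.e. it is
δ-quantum-differentially-private with δ = 2 log((1+α)/(1−α)) = 4 arctanh(α). -/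
theorem gentle_posdef_implies_qdp
    {d : ℕ} (hd : 0 < d) {Y : Type*} [Fintype Y]
    (M : Y → Matrix (Fin d) (Fin d) ℂ)
    (hpos : ∀ y, (M y).PosDef)
    (hcomplete : ∑ y, (M y)ᴴ * M y = 1)
    (α : ℝ) (hα0 : 0 ≤ α) (hα1 : α < 1)
    (hgentle : ∀ ρ : Matrix (Fin d) (Fin d) ℂ, ρ.PosSemidef → ρ.trace = 1 →
      ∀ y : Y, ∀ p : ℝ, p = (ρ * ((M y)ᴴ * M y)).trace.re → 0 < p →
      ∀ h : (ρ - ((1 : ℂ) / (p : ℂ)) • (M y * ρ * (M y)ᴴ)).IsHermitian,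
        (1 / 2 : ℝ) * ∑ i, |h.eigenvalues i| ≤ α) :
    ∀ y, (⨆ i, (Matrix.posSemidef_conjTranspose_mul_self (M y)).1.eigenvalues i) ≤
        Real.exp (2 * Real.log ((1 + α) / (1 - α))) *
          ⨅ i, (Matrix.posSemidef_conjTranspose_mul_self (M y)).1.eigenvalues i := by
  intro y
  classical
  haveI : Nonempty (Fin d) := ⟨⟨0, hd⟩⟩
  set N := M y with hNdef
  have hN : N.PosDef := hpos y
  set hH : (Nᴴ * N).IsHermitian := (Matrix.posSemidef_conjTranspose_mul_self N).1 with hHdef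
  set lam : Fin d → ℝ := hH.eigenvalues with hlamdef
  -- positivity of eigenvalues
  have hApos : (Nᴴ * N).PosDef := by
    refine posDef_iff_dotProduct_mulVec.mpr ⟨hH, fun x hx => ?_⟩
    have h1 : star x ⬝ᵥ (Nᴴ * N) *ᵥ x = star (N *ᵥ x) ⬝ᵥ (N *ᵥ x) := by
      rw [← mulVec_mulVec, dotProduct_mulVec, vecMul_conjTranspose, star_star]
    have hNx : N *ᵥ x ≠ 0 := by
      intro h0
      have h2 := hN.dotProduct_mulVec_pos hx
      rw [h0, dotProduct_zero] at h2
      exact lt_irrefl 0 h2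
    rw [h1]
    have hge : 0 ≤ star (N *ᵥ x) ⬝ᵥ (N *ᵥ x) := dotProduct_star_self_nonneg _
    refine lt_of_le_of_ne hge fun heq => ?_
    exact hNx (dotProduct_star_self_eq_zero.1 heq.symm)
  have hlam_pos : ∀ k, 0 < lam k := fun k => hApos.eigenvalues_pos k
  set C := Real.exp (2 * Real.log ((1 + α) / (1 - α))) with hC
  have hα1' : (0:ℝ) < 1 - α := by linarith
  have hxpos : (0:ℝ) < (1 + α) / (1 - α) := by positivity
  have hCeq : C = ((1 + α) / (1 - α))^2 := by
    rw [hC, two_mul, Real.exp_add, Real.exp_log hxpos, sq]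
  have hC1 : (1:ℝ) ≤ C := by
    rw [hCeq]
    have h1 : (1:ℝ) ≤ (1 + α) / (1 - α) := by
      rw [le_div_iff₀ hα1']; linarith
    nlinarith
  -- orthonormality facts
  have horth : ∀ k l, star (⇑(hH.eigenvectorBasis k) : Fin d → ℂ) ⬝ᵥ
      (⇑(hH.eigenvectorBasis l) : Fin d → ℂ) = if k = l then 1 else 0 := by
    intro k l
    have h := orthonormal_iff_ite.mp hH.eigenvectorBasis.orthonormal k l
    rw [EuclideanSpace.inner_eq_star_dotProduct, dotProduct_comm] at h
    exact h
  -- eigenvector equation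
  have hAvec : ∀ k, (Nᴴ * N) *ᵥ (⇑(hH.eigenvectorBasis k) : Fin d → ℂ)
      = ((lam k : ℝ) : ℂ) • (⇑(hH.eigenvectorBasis k) : Fin d → ℂ) := by
    intro k
    have h := hH.mulVec_eigenvectorBasis k
    rw [h, ← hlamdef]
    ext l
    simp [Complex.real_smul]
  -- square-root eigenvector equation
  have hNvec : ∀ (c : ℝ) (k : Fin d), 0 < c → c * c = lam k →
      N *ᵥ (⇑(hH.eigenvectorBasis k) : Fin d → ℂ)
        = (c : ℂ) • (⇑(hH.eigenvectorBasis k) : Fin d → ℂ) := by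
    intro c k hc hc2
    have hBp : (N + (c:ℂ) • 1).PosDef := by
      refine posDef_iff_dotProduct_mulVec.mpr ⟨?_, fun x hx => ?_⟩
      · show _ᴴ = _
        rw [conjTranspose_add, conjTranspose_smul, conjTranspose_one, hN.1]
        congr 1
        simp [Complex.star_def, Complex.conj_ofReal]
      · rw [add_mulVec, smul_mulVec, one_mulVec, dotProduct_add, dotProduct_smul,
          smul_eq_mul]
        have h1 := hN.dotProduct_mulVec_pos hx
        have h2 : (0:ℂ) < (c:ℂ) * (star x ⬝ᵥ x) := by
          refine mul_pos ?_ ?_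
          · exact_mod_cast Complex.zero_lt_real.2 hc
          · refine lt_of_le_of_ne (dotProduct_star_self_nonneg _) fun heq => ?_
            exact hx (dotProduct_star_self_eq_zero.1 heq.symm)
        exact add_pos h1 h2
    have hinj : ∀ x : Fin d → ℂ, (N + (c:ℂ) • 1) *ᵥ x = 0 → x = 0 := by
      intro x hx0
      by_contra hxne
      have h := hBp.dotProduct_mulVec_pos hxne
      rw [hx0, dotProduct_zero] at h
      exact lt_irrefl 0 h
    have hcc : (c:ℂ) * (c:ℂ) = ((lam k : ℝ) : ℂ) := by
      rw [← Complex.ofReal_mul, hc2]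
    have hfact : (N + (c:ℂ) • 1) * (N - (c:ℂ) • 1) = Nᴴ * N - ((lam k : ℝ) : ℂ) • 1 := by
      rw [hN.1]
      simp only [mul_sub, add_mul, smul_mul_assoc, mul_smul_comm, smul_add, smul_smul,
        one_mul, mul_one, hcc]
      abel
    have h0 : (N + (c:ℂ) • 1) *ᵥ ((N - (c:ℂ) • 1) *ᵥ (⇑(hH.eigenvectorBasis k) : Fin d → ℂ)) = 0 := by
      rw [mulVec_mulVec, hfact, sub_mulVec, smul_mulVec, one_mulVec, hAvec k, sub_self]
    have h1 := hinj _ h0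
    rw [sub_mulVec, smul_mulVec, one_mulVec] at h1
    exact sub_eq_zero.mp h1
  -- key pairwise inequality
  have key : ∀ i j, lam i ≤ C * lam j := by
    intro i j
    rcases le_or_gt (lam i) (lam j) with hij | hij
    · nlinarith [hlam_pos j]
    have hij_ne : i ≠ j := fun h => by rw [h] at hij; exact lt_irrefl _ hij
    set a := Real.sqrt (lam i) with hadef
    set b := Real.sqrt (lam j) with hbdef
    have ha : 0 < a := Real.sqrt_pos.2 (hlam_pos i)
    have hb : 0 < b := Real.sqrt_pos.2 (hlam_pos j)
    have ha2 : a * a = lam i := Real.mul_self_sqrt (hlam_pos i).le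
    have hb2 : b * b = lam j := Real.mul_self_sqrt (hlam_pos j).le
    have hab : 0 < a + b := by linarith
    have hoUU := horth i i
    have hoVV := horth j j
    have hoUV := horth i j
    have hAu := hAvec i
    have hAv := hAvec j
    have hNu := hNvec a i ha ha2
    have hNv := hNvec b j hb hb2
    set u : Fin d → ℂ := (⇑(hH.eigenvectorBasis i) : Fin d → ℂ) with hudef
    set v : Fin d → ℂ := (⇑(hH.eigenvectorBasis j) : Fin d → ℂ) with hvdef
    have huu : star u ⬝ᵥ u = 1 := by simpa using hoUU
    have hvv : star v ⬝ᵥ v = 1 := by simpa using hoVV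
    have huv : star u ⬝ᵥ v = 0 := by simpa [hij_ne] using hoUV
    have hvu : star v ⬝ᵥ u = 0 := by
      rw [GentleAux.star_dot_comm, huv, star_zero]
    set Pu := vecMulVec u (star u) with hPu
    set Pv := vecMulVec v (star v) with hPv
    set e1 : ℝ := b / (a + b) with he1
    set e2 : ℝ := a / (a + b) with he2
    set t : ℝ := (a - b) / (a + b) with htdef
    set p : ℝ := a * b with hpdef
    set ρ : Matrix (Fin d) (Fin d) ℂ := (e1 : ℂ) • Pu + (e2 : ℂ) • Pv with hρ
    have hρpsd : ρ.PosSemidef :=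
      (GentleAux.smul_posSemidef (div_nonneg hb.le hab.le)
          (GentleAux.posSemidef_vecMulVec_star u)).add
        (GentleAux.smul_posSemidef (div_nonneg ha.le hab.le)
          (GentleAux.posSemidef_vecMulVec_star v))
    have htru : Pu.trace = 1 := by
      rw [hPu, GentleAux.trace_vecMulVec, dotProduct_comm, huu]
    have htrv : Pv.trace = 1 := by
      rw [hPv, GentleAux.trace_vecMulVec, dotProduct_comm, hvv]
    have hρtr : ρ.trace = 1 := by
      rw [hρ, trace_add, trace_smul, trace_smul, htru, htrv, smul_eq_mul, smul_eq_mul,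
        mul_one, mul_one, ← Complex.ofReal_add]
      norm_cast
      rw [he1, he2, ← add_div, div_eq_one_iff_eq hab.ne']
      ring
    have hPuA : (Pu * (Nᴴ * N)).trace = ((lam i : ℝ) : ℂ) := by
      rw [trace_mul_comm, hPu, GentleAux.mul_vecMulVec, hAu, GentleAux.smul_vecMulVec_left,
        trace_smul, GentleAux.trace_vecMulVec, dotProduct_comm, huu, smul_eq_mul, mul_one]
    have hPvA : (Pv * (Nᴴ * N)).trace = ((lam j : ℝ) : ℂ) := by
      rw [trace_mul_comm, hPv, GentleAux.mul_vecMulVec, hAv, GentleAux.smul_vecMulVec_left,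
        trace_smul, GentleAux.trace_vecMulVec, dotProduct_comm, hvv, smul_eq_mul, mul_one]
    have htrρA : (ρ * (Nᴴ * N)).trace = ((e1 * lam i + e2 * lam j : ℝ) : ℂ) := by
      rw [hρ, add_mul, smul_mul_assoc, smul_mul_assoc, trace_add, trace_smul, trace_smul,
        hPuA, hPvA, smul_eq_mul, smul_eq_mul]
      push_cast
      ring
    have hp : p = (ρ * (Nᴴ * N)).trace.re := by
      rw [htrρA, Complex.ofReal_re, hpdef, he1, he2, ← ha2, ← hb2]
      field_simp
    have hp0 : 0 < p := mul_pos ha hb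
    have hstar_a : star ((a : ℝ) : ℂ) = ((a : ℝ) : ℂ) := by
      simp [Complex.star_def, Complex.conj_ofReal]
    have hstar_b : star ((b : ℝ) : ℂ) = ((b : ℝ) : ℂ) := by
      simp [Complex.star_def, Complex.conj_ofReal]
    have hNPuN : N * Pu * Nᴴ = ((lam i : ℝ) : ℂ) • Pu := by
      rw [hPu, GentleAux.mul_vecMulVec, hNu, GentleAux.vecMulVec_mul, ← star_mulVec, hNu,
        star_smul, hstar_a, GentleAux.smul_vecMulVec_left, GentleAux.smul_vecMulVec_right,
        smul_smul, ← Complex.ofReal_mul, ha2]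
    have hNPvN : N * Pv * Nᴴ = ((lam j : ℝ) : ℂ) • Pv := by
      rw [hPv, GentleAux.mul_vecMulVec, hNv, GentleAux.vecMulVec_mul, ← star_mulVec, hNv,
        star_smul, hstar_b, GentleAux.smul_vecMulVec_left, GentleAux.smul_vecMulVec_right,
        smul_smul, ← Complex.ofReal_mul, hb2]
    set Dm : Matrix (Fin d) (Fin d) ℂ := ρ - ((1 : ℂ) / (p : ℂ)) • (N * ρ * Nᴴ) with hDm
    have hσ : N * ρ * Nᴴ = (e1 : ℂ) • (((lam i : ℝ) : ℂ) • Pu)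
        + (e2 : ℂ) • (((lam j : ℝ) : ℂ) • Pv) := by
      rw [hρ, mul_add, add_mul, mul_smul_comm, mul_smul_comm, smul_mul_assoc, smul_mul_assoc,
        hNPuN, hNPvN]
    have hc1 : (e1 : ℂ) - ((1 : ℂ) / (p : ℂ)) * ((e1 : ℂ) * ((lam i : ℝ) : ℂ))
        = -((t : ℝ) : ℂ) := by
      have hr : e1 - (1 / p) * (e1 * lam i) = -t := by
        rw [he1, hpdef, htdef, ← ha2]
        field_simp
        ring
      exact_mod_cast congrArg (fun r : ℝ => (r : ℂ)) hr
    have hc2 : (e2 : ℂ) - ((1 : ℂ) / (p : ℂ)) * ((e2 : ℂ) * ((lam j : ℝ) : ℂ))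
        = ((t : ℝ) : ℂ) := by
      have hr : e2 - (1 / p) * (e2 * lam j) = t := by
        rw [he2, hpdef, htdef, ← hb2]
        field_simp
      exact_mod_cast congrArg (fun r : ℝ => (r : ℂ)) hr
    have hDeq : Dm = ((t : ℝ) : ℂ) • (Pv - Pu) := by
      rw [hDm, hσ, hρ]
      have hmod : ∀ (x y : Matrix (Fin d) (Fin d) ℂ) (c1 c2 d1 d2 q : ℂ),
          (c1 • x + c2 • y) - q • (c1 • (d1 • x) + c2 • (d2 • y))
            = (c1 - q * (c1 * d1)) • x + (c2 - q * (c2 * d2)) • y := by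
        intro x y c1 c2 d1 d2 q
        module
      rw [hmod, hc1, hc2, smul_sub, neg_smul]
      abel
    have hPuH : Puᴴ = Pu := (GentleAux.posSemidef_vecMulVec_star u).1
    have hPvH : Pvᴴ = Pv := (GentleAux.posSemidef_vecMulVec_star v).1
    have hDH : Dm.IsHermitian := by
      rw [hDeq]
      show _ᴴ = _
      rw [conjTranspose_smul, conjTranspose_sub, hPuH, hPvH]
      congr 1
      simp [Complex.star_def, Complex.conj_ofReal]
    have hg : (1 / 2 : ℝ) * ∑ k, |hDH.eigenvalues k| ≤ α :=
      hgentle ρ hρpsd hρtr y p hp hp0 hDH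
    have hspec := hDH.spectral_theorem
    set μ : Fin d → ℝ := hDH.eigenvalues with hμdef
    set U : Matrix (Fin d) (Fin d) ℂ := (hDH.eigenvectorUnitary : Matrix (Fin d) (Fin d) ℂ)
      with hUdef
    have hBB : (Pv - Pu) * (Pv - Pu) = Pv + Pu := by
      rw [hPu, hPv, sub_mul, mul_sub, mul_sub, GentleAux.vecMulVec_mul_vecMulVec,
        GentleAux.vecMulVec_mul_vecMulVec, GentleAux.vecMulVec_mul_vecMulVec,
        GentleAux.vecMulVec_mul_vecMulVec, hvv, huu, huv, hvu, one_smul, one_smul,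
        zero_smul, zero_smul, sub_zero, zero_sub, sub_neg_eq_add]
    have htrDB : (Dm * (Pv - Pu)).trace = ((2 * t : ℝ) : ℂ) := by
      rw [hDeq, smul_mul_assoc, hBB, trace_smul, trace_add, htru, htrv, smul_eq_mul]
      push_cast
      ring
    have hsum : (Dm * (Pv - Pu)).trace
        = ∑ k, (Complex.ofReal (μ k)) * ((star U * (Pv - Pu) * U) k k) := by
      calc (Dm * (Pv - Pu)).trace
          = ((U * diagonal (RCLike.ofReal ∘ μ)) * (star U * (Pv - Pu))).trace := by
            rw [hspec, Unitary.conjStarAlgAut_apply, Matrix.mul_assoc]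
        _ = ((star U * (Pv - Pu)) * (U * diagonal (RCLike.ofReal ∘ μ))).trace :=
            trace_mul_comm _ _
        _ = ((star U * (Pv - Pu) * U) * diagonal (RCLike.ofReal ∘ μ)).trace := by
            rw [← Matrix.mul_assoc]
        _ = ∑ k, (star U * (Pv - Pu) * U) k k * (RCLike.ofReal ∘ μ) k :=
            GentleAux.trace_mul_diagonal _ _
        _ = ∑ k, (Complex.ofReal (μ k)) * ((star U * (Pv - Pu) * U) k k) :=
            Finset.sum_congr rfl fun k _ => mul_comm _ _
    have hcol_eq : ∀ k, (fun l => U l k) = (⇑(hDH.eigenvectorBasis k) : Fin d → ℂ) := by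
      intro k
      funext l
      rw [hUdef]
      exact Matrix.IsHermitian.eigenvectorUnitary_apply hDH l k
    have hcol : ∀ k, star (fun l => U l k) ⬝ᵥ (fun l => U l k) = 1 := by
      intro k
      rw [hcol_eq k]
      have h := orthonormal_iff_ite.mp hDH.eigenvectorBasis.orthonormal k k
      rw [EuclideanSpace.inner_eq_star_dotProduct, dotProduct_comm] at h
      simpa using h
    have hdiag : ∀ k, (star U * (Pv - Pu) * U) k k
        = ((Complex.normSq (star v ⬝ᵥ fun l => U l k)
            - Complex.normSq (star u ⬝ᵥ fun l => U l k) : ℝ) : ℂ) := by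
      intro k
      rw [GentleAux.diag_conj, hPu, hPv, sub_mulVec, GentleAux.vecMulVec_mulVec,
        GentleAux.vecMulVec_mulVec, dotProduct_sub, dotProduct_smul, dotProduct_smul,
        GentleAux.star_dot_comm (fun l => U l k) v, GentleAux.star_dot_comm (fun l => U l k) u]
      simp only [smul_eq_mul, Complex.star_def, Complex.mul_conj]
      push_cast
      ring
    have hwk_bound : ∀ k, |Complex.normSq (star v ⬝ᵥ fun l => U l k)
        - Complex.normSq (star u ⬝ᵥ fun l => U l k)| ≤ 1 := by
      intro k
      have hB := GentleAux.bessel_two u v (fun l => U l k) huu hvv huv (hcol k)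
      have h1 := Complex.normSq_nonneg (star u ⬝ᵥ fun l => U l k)
      have h2 := Complex.normSq_nonneg (star v ⬝ᵥ fun l => U l k)
      rw [abs_le]
      constructor <;> linarith
    have h2t : 2 * t = ∑ k, μ k * (Complex.normSq (star v ⬝ᵥ fun l => U l k)
        - Complex.normSq (star u ⬝ᵥ fun l => U l k)) := by
      have hc : ((2 * t : ℝ) : ℂ)
          = ∑ k, (Complex.ofReal (μ k)) * ((star U * (Pv - Pu) * U) k k) := by
        rw [← hsum, htrDB]
      simp only [hdiag] at hc
      have hc2 : ((2 * t : ℝ) : ℂ) = ((∑ k, μ k * (Complex.normSq (star v ⬝ᵥ fun l => U l k)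
          - Complex.normSq (star u ⬝ᵥ fun l => U l k)) : ℝ) : ℂ) := by
        rw [hc]
        push_cast
        rfl
      exact_mod_cast hc2
    have hsum_le : ∑ k, μ k * (Complex.normSq (star v ⬝ᵥ fun l => U l k)
        - Complex.normSq (star u ⬝ᵥ fun l => U l k)) ≤ ∑ k, |μ k| := by
      refine Finset.sum_le_sum fun k _ => ?_
      calc μ k * (Complex.normSq (star v ⬝ᵥ fun l => U l k)
            - Complex.normSq (star u ⬝ᵥ fun l => U l k))
          ≤ |μ k * (Complex.normSq (star v ⬝ᵥ fun l => U l k)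
            - Complex.normSq (star u ⬝ᵥ fun l => U l k))| := le_abs_self _
        _ = |μ k| * |Complex.normSq (star v ⬝ᵥ fun l => U l k)
            - Complex.normSq (star u ⬝ᵥ fun l => U l k)| := abs_mul _ _
        _ ≤ |μ k| * 1 := mul_le_mul_of_nonneg_left (hwk_bound k) (abs_nonneg _)
        _ = |μ k| := mul_one _
    have ht_le : t ≤ α := by linarith
    rw [hCeq, ← ha2, ← hb2]
    have h5 : a - b ≤ α * (a + b) := by
      rw [htdef, div_le_iff₀ hab] at ht_le
      linarith
    have h6 : a * (1 - α) ≤ b * (1 + α) := by nlinarith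
    have h7 : (a * (1 - α)) * (a * (1 - α)) ≤ (b * (1 + α)) * (b * (1 + α)) :=
      mul_self_le_mul_self (by nlinarith) h6
    rw [div_pow, div_mul_eq_mul_div, le_div_iff₀ (by positivity)]
    nlinarith [h7]
  obtain ⟨j0, hj0⟩ := Finite.exists_min lam
  have hinf : ⨅ k, lam k = lam j0 :=
    le_antisymm (ciInf_le (Finite.bddBelow_range lam) j0) (le_ciInf hj0)
  rw [hinf]
  exact ciSup_le fun i => key i j0
end

section
/- Let (|v_m⟩)_{m=1}^D be unit vectors in ℂ^d with Σ_{m=1}^D |v_m⟩⟨v_m| = (D/d)·1. For δ > 0, z ∈ {0,1}^D, and e_m the m-th standard basis vector of {0,1}^D, define E_{δ,z} = (e^{δ/2}/(e^{δ/2}+1))^D · (d/D) · Σ_{m=1}^D e^{−(δ/2)‖z − e_m‖₁} |v_m⟩⟨v_m|. Then each E_{δ,z} is positive semidefinite and Σ_{z∈{0,1}^D} E_{δ,z} = 1, i.e. (E_{δ,z})_z forms a POVM. -/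
open Matrix BigOperators ComplexOrder

/-- Hamming distance between z ∈ {0,1}^D and the m-th standard basis vector e_m. -/
def hammingToBasis {D : ℕ} (z : Fin D → Bool) (m : Fin D) : ℕ :=
  (Finset.univ.filter (fun i => z i ≠ decide (i = m))).card

/-- The noisy 2-design POVM element E_{δ,z}. -/
noncomputable def noisyPOVMElement {d D : ℕ} (v : Fin D → (Fin d → ℂ)) (δ : ℝ)
    (z : Fin D → Bool) : Matrix (Fin d) (Fin d) ℂ :=
  (((Real.exp (δ / 2) / (Real.exp (δ / 2) + 1)) ^ D * (d / D) : ℝ) : ℂ) •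
    ∑ m, ((Real.exp (-(δ / 2) * (hammingToBasis z m)) : ℝ) : ℂ) •
      Matrix.vecMulVec (v m) (star (v m))

private lemma real_smul_posSemidef {n : ℕ} {r : ℝ} (hr : 0 ≤ r)
    {M : Matrix (Fin n) (Fin n) ℂ} (hM : M.PosSemidef) : ((r : ℂ) • M).PosSemidef := by
  constructor
  · unfold Matrix.IsHermitian
    rw [Matrix.conjTranspose_smul, hM.1.eq]
    simp
  · intro x
    exact (hM.smul (a := (r : ℂ)) (by exact_mod_cast hr)).2 x

private lemma outer_posSemidef {n : ℕ} (v : Fin n → ℂ) :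
    (Matrix.vecMulVec v (star v)).PosSemidef := by
  exact Matrix.posSemidef_vecMulVec_self_star v

private lemma sum_pow_hamming (D : ℕ) (t : ℝ) (f : Fin D → Bool) :
    ∑ z : Fin D → Bool, t ^ (Finset.univ.filter (fun i => z i ≠ f i)).card
      = (1 + t) ^ D := by
  have h : ∀ z : Fin D → Bool, t ^ (Finset.univ.filter (fun i => z i ≠ f i)).card
      = ∏ i, (if z i ≠ f i then t else 1) := by
    intro z
    rw [← Finset.prod_const, Finset.prod_filter]
  simp_rw [h]
  rw [← Fintype.prod_sum (fun (i : Fin D) (b : Bool) => if b ≠ f i then t else 1)]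
  have h2 : ∀ i : Fin D,
      ((if (f i) = true then 1 else t) + if (f i) = false then 1 else t) = 1 + t := by
    intro i; cases hf : f i <;> simp <;> ring
  simp [Fintype.sum_bool, h2]

private lemma sum_exp_hamming (D : ℕ) (δ : ℝ) (m : Fin D) :
    ∑ z : Fin D → Bool, Real.exp (-(δ / 2) * (hammingToBasis z m))
      = (1 + Real.exp (-(δ / 2))) ^ D := by
  have h : ∀ z : Fin D → Bool, Real.exp (-(δ / 2) * (hammingToBasis z m))
      = Real.exp (-(δ / 2)) ^ (hammingToBasis z m) := by
    intro z
    rw [mul_comm, Real.exp_nat_mul]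
  simp_rw [h]
  exact sum_pow_hamming D _ _

set_option maxHeartbeats 1000000 in
/-- The operators E_{δ,z} are positive semidefinite and sum to the
identity over z ∈ {0,1}^D, i.e. they form a POVM. -/
theorem noisy_two_design_is_povm
    {d D : ℕ} (hd : 0 < d) (hD : 0 < D)
    (v : Fin D → (Fin d → ℂ)) (hv : ∀ m, star (v m) ⬝ᵥ v m = 1)
    (hres : ∑ m, Matrix.vecMulVec (v m) (star (v m))
      = (((D : ℝ) / d : ℝ) : ℂ) • (1 : Matrix (Fin d) (Fin d) ℂ))
    (δ : ℝ) (hδ : 0 < δ) :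
    (∀ z : Fin D → Bool, (noisyPOVMElement v δ z).PosSemidef) ∧
      ∑ z : Fin D → Bool, noisyPOVMElement v δ z = 1 := by
  have he : (0:ℝ) < Real.exp (δ / 2) := Real.exp_pos _
  constructor
  · intro z
    unfold noisyPOVMElement
    apply real_smul_posSemidef
    · positivity
    · apply Finset.sum_induction _ _ (fun A B hA hB => hA.add hB) Matrix.PosSemidef.zero
      intro m _
      exact real_smul_posSemidef (Real.exp_nonneg _) (outer_posSemidef (v m))
  · unfold noisyPOVMElement
    rw [← Finset.smul_sum, Finset.sum_comm]
    simp_rw [← Finset.sum_smul, ← Complex.ofReal_sum, sum_exp_hamming D δ]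
    rw [← Finset.smul_sum, hres, smul_smul, smul_smul, ← Complex.ofReal_mul,
      ← Complex.ofReal_mul]
    have hd' : (d : ℝ) ≠ 0 := Nat.cast_ne_zero.mpr hd.ne'
    have hD' : (D : ℝ) ≠ 0 := Nat.cast_ne_zero.mpr hD.ne'
    have h2 : Real.exp (δ / 2) * (1 + Real.exp (-(δ / 2))) = Real.exp (δ / 2) + 1 := by
      rw [mul_add, mul_one, ← Real.exp_add, add_neg_cancel, Real.exp_zero]
    have h1 : Real.exp (δ / 2) / (Real.exp (δ / 2) + 1) * (1 + Real.exp (-(δ / 2))) = 1 := by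
      rw [div_mul_eq_mul_div, h2, div_self (by positivity)]
    have key : (Real.exp (δ / 2) / (Real.exp (δ / 2) + 1)) ^ D * ((d : ℝ) / D) *
        (1 + Real.exp (-(δ / 2))) ^ D * ((D : ℝ) / d) = 1 := by
      calc (Real.exp (δ / 2) / (Real.exp (δ / 2) + 1)) ^ D * ((d : ℝ) / D) *
            (1 + Real.exp (-(δ / 2))) ^ D * ((D : ℝ) / d)
          = ((Real.exp (δ / 2) / (Real.exp (δ / 2) + 1)) ^ D *
              (1 + Real.exp (-(δ / 2))) ^ D) * (((d : ℝ) / D) * ((D : ℝ) / d)) := by ring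
        _ = 1 := by
            rw [← mul_pow, h1, one_pow, one_mul]
            field_simp
    rw [key]
    simp
end

section
/- With E_{δ,z} as above (built from vectors satisfying Σ_m |v_m⟩⟨v_m| = (D/d)·1), for every z ∈ {0,1}^D we have λ_max(E_{δ,z}) ≤ e^δ λ_min(E_{δ,z}); consequently the measurement (√E_{δ,z})_z is δ-quantum-differentially-private. -/
open Matrix BigOperators ComplexOrder

/- Auxiliary lemmas -/

lemma trace_mul_vecMulVec' {d : ℕ} (ρ : Matrix (Fin d) (Fin d) ℂ) (u w : Fin d → ℂ) :
    (ρ * Matrix.vecMulVec u w).trace = w ⬝ᵥ ρ.mulVec u := by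
  simp only [Matrix.trace, Matrix.diag, Matrix.mul_apply, Matrix.vecMulVec_apply,
    dotProduct, Matrix.mulVec, Finset.mul_sum]
  apply Finset.sum_congr rfl
  intro i _
  apply Finset.sum_congr rfl
  intro j _
  ring

lemma vecMulVec_mulVec' {d : ℕ} (u w x : Fin d → ℂ) :
    (Matrix.vecMulVec u w).mulVec x = (w ⬝ᵥ x) • u := by
  ext i
  simp only [Matrix.mulVec, Matrix.vecMulVec_apply, dotProduct, Pi.smul_apply,
    smul_eq_mul, Finset.sum_mul, Finset.mul_sum]
  apply Finset.sum_congr rfl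
  intro j _
  ring

lemma conjTranspose_vecMulVec_star {d : ℕ} (u : Fin d → ℂ) :
    (Matrix.vecMulVec u (star u))ᴴ = Matrix.vecMulVec u (star u) := by
  ext i j
  simp [Matrix.conjTranspose_apply, Matrix.vecMulVec_apply, mul_comm]

lemma posSemidef_vecMulVec_star {d : ℕ} (u : Fin d → ℂ) :
    (Matrix.vecMulVec u (star u)).PosSemidef := by
  refine Matrix.PosSemidef.of_dotProduct_mulVec_nonneg (conjTranspose_vecMulVec_star u) fun x => ?_
  rw [vecMulVec_mulVec', dotProduct_smul]
  have hdot : star x ⬝ᵥ u = star (star u ⬝ᵥ x) := by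
    simp [dotProduct, Finset.sum_comm, mul_comm]
  rw [smul_eq_mul, hdot, mul_comm]
  exact star_mul_self_nonneg (star u ⬝ᵥ x)

lemma trace_vecMulVec_star {d : ℕ} (u : Fin d → ℂ) :
    (Matrix.vecMulVec u (star u)).trace = star u ⬝ᵥ u := by
  simp [Matrix.trace, Matrix.diag, Matrix.vecMulVec_apply, dotProduct, mul_comm]

lemma hammingToBasis_le {D : ℕ} (z : Fin D → Bool) (m : Fin D) :
    hammingToBasis z m ≤ (Finset.univ.filter (fun i => z i = true)).card + 1 := by
  unfold hammingToBasis
  calc (Finset.univ.filter (fun i => z i ≠ decide (i = m))).card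
      ≤ (insert m (Finset.univ.filter (fun i => z i = true))).card := by
        apply Finset.card_le_card
        intro i hi
        simp only [Finset.mem_filter, Finset.mem_univ, true_and] at hi
        simp only [Finset.mem_insert, Finset.mem_filter, Finset.mem_univ, true_and]
        by_cases h : i = m
        · exact Or.inl h
        · right
          simp [h] at hi
          exact hi
    _ ≤ _ := by
        have := Finset.card_insert_le m (Finset.univ.filter (fun i => z i = true))
        omega

lemma le_hammingToBasis {D : ℕ} (z : Fin D → Bool) (m : Fin D) :
    (Finset.univ.filter (fun i => z i = true)).card ≤ hammingToBasis z m + 1 := by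
  unfold hammingToBasis
  calc (Finset.univ.filter (fun i => z i = true)).card
      ≤ (insert m (Finset.univ.filter (fun i => z i ≠ decide (i = m)))).card := by
        apply Finset.card_le_card
        intro i hi
        simp only [Finset.mem_filter, Finset.mem_univ, true_and] at hi
        simp only [Finset.mem_insert, Finset.mem_filter, Finset.mem_univ, true_and]
        by_cases h : i = m
        · exact Or.inl h
        · right
          simp [h, hi]
    _ ≤ _ := by
        have := Finset.card_insert_le m (Finset.univ.filter (fun i => z i ≠ decide (i = m)))
        omega

/-- Each E_{δ,z} satisfies λ_max(E_{δ,z}) ≤ e^δ λ_min(E_{δ,z});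
consequently the measurement (√E_{δ,z})_z is δ-quantum-differentially-private. -/
theorem noisy_two_design_is_qdp
    {d D : ℕ} (hd : 0 < d) (hD : 0 < D)
    (v : Fin D → (Fin d → ℂ)) (hv : ∀ m, star (v m) ⬝ᵥ v m = 1)
    (hres : ∑ m,Matrix.vecMulVec (v m) (star (v m))
      = (((D : ℝ) / d : ℝ) : ℂ) • (1 : Matrix (Fin d) (Fin d) ℂ))
    (δ : ℝ) (hδ : 0 < δ) :
    ∀ z : Fin D → Bool,
      (∃ hz : (noisyPOVMElement v δ z).IsHermitian,
        (⨆ i, hz.eigenvalues i) ≤ Real.exp δ * ⨅ i, hz.eigenvalues i) ∧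
      (∀ ρ σ : Matrix (Fin d) (Fin d) ℂ,
        ρ.PosSemidef → ρ.trace = 1 → σ.PosSemidef → σ.trace = 1 →
        (ρ * noisyPOVMElement v δ z).trace.re ≤
          Real.exp δ * (σ * noisyPOVMElement v δ z).trace.re) := by
  intro z
  -- abbreviations
  set c : ℝ := (Real.exp (δ / 2) / (Real.exp (δ / 2) + 1)) ^ D * (d / D) with hc_def
  set a : Fin D → ℝ := fun m => Real.exp (-(δ / 2) * (hammingToBasis z m)) with ha_def
  set k : ℝ := ((Finset.univ.filter (fun i => z i = true)).card : ℝ) with hk_def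
  set A₀ : ℝ := Real.exp (-(δ / 2) * (k + 1)) with hA0_def
  have hc : 0 < c := by
    apply mul_pos
    · exact pow_pos (div_pos (Real.exp_pos _) (by positivity)) _
    · exact div_pos (by exact_mod_cast hd) (by exact_mod_cast hD)
  have hA0 : 0 < A₀ := Real.exp_pos _
  have ha_lb : ∀ m, A₀ ≤ a m := by
    intro m
    apply Real.exp_le_exp.2
    have h := hammingToBasis_le z m
    have h' : (hammingToBasis z m : ℝ) ≤ k + 1 := by
      rw [hk_def]; exact_mod_cast h
    nlinarith
  have ha_ub : ∀ m, a m ≤ Real.exp δ * A₀ := by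
    intro m
    rw [← Real.exp_add]
    apply Real.exp_le_exp.2
    have h := le_hammingToBasis z m
    have h' : k ≤ (hammingToBasis z m : ℝ) + 1 := by
      rw [hk_def]; exact_mod_cast h
    nlinarith
  set B : ℝ := c * (A₀ * ((D : ℝ) / d)) with hB_def
  have hB : 0 < B := by
    apply mul_pos hc
    apply mul_pos hA0
    exact div_pos (by exact_mod_cast hD) (by exact_mod_cast hd)
  -- the key lemma
  have key : ∀ ρ : Matrix (Fin d) (Fin d) ℂ, ρ.PosSemidef → ρ.trace = 1 →
      B ≤ (ρ * noisyPOVMElement v δ z).trace.re ∧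
      (ρ * noisyPOVMElement v δ z).trace.re ≤ Real.exp δ * B := by
    intro ρ hρ hρtr
    set t : Fin D → ℝ := fun m => (star (v m) ⬝ᵥ ρ.mulVec (v m)).re with ht_def
    have ht0 : ∀ m, 0 ≤ t m := by
      intro m
      have := hρ.dotProduct_mulVec_nonneg (v m)
      rw [Complex.nonneg_iff] at this
      exact this.1
    have htim : ∀ m, star (v m) ⬝ᵥ ρ.mulVec (v m) = ((t m : ℝ) : ℂ) := by
      intro m
      have := hρ.dotProduct_mulVec_nonneg (v m)
      rw [Complex.nonneg_iff] at this
      apply Complex.ext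
      · simp [ht_def]
      · simp [← this.2]
    have hsum_t : ∑ m, t m = (D : ℝ) / d := by
      have h1 : ∑ m, (ρ * Matrix.vecMulVec (v m) (star (v m))).trace
          = (((D : ℝ) / d : ℝ) : ℂ) := by
        rw [← Matrix.trace_sum, ← Matrix.mul_sum, hres, Matrix.mul_smul, Matrix.mul_one,
          Matrix.trace_smul, hρtr, smul_eq_mul, mul_one]
      have h2 : ∑ m, (ρ * Matrix.vecMulVec (v m) (star (v m))).trace
          = ((∑ m, t m : ℝ) : ℂ) := by
        push_cast
        apply Finset.sum_congr rfl
        intro m _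
        rw [trace_mul_vecMulVec', htim]
      rw [h2] at h1
      exact_mod_cast h1
    have htr : (ρ * noisyPOVMElement v δ z).trace.re = c * ∑ m, a m * t m := by
      have : (ρ * noisyPOVMElement v δ z).trace = ((c * ∑ m, a m * t m : ℝ) : ℂ) := by
        unfold noisyPOVMElement
        rw [Matrix.mul_smul, Matrix.trace_smul, Matrix.mul_sum, Matrix.trace_sum]
        have hterm : ∀ m : Fin D, (ρ * (((Real.exp (-(δ / 2) * (hammingToBasis z m)) : ℝ) : ℂ) •
            Matrix.vecMulVec (v m) (star (v m)))).trace = ((a m * t m : ℝ) : ℂ) := by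
          intro m
          rw [Matrix.mul_smul, Matrix.trace_smul, trace_mul_vecMulVec', htim, smul_eq_mul,
            Complex.ofReal_mul]
        rw [Finset.sum_congr rfl (fun m _ => hterm m), smul_eq_mul, ← Complex.ofReal_sum,
          ← Complex.ofReal_mul]
      rw [this, Complex.ofReal_re]
    constructor
    · rw [htr, hB_def]
      have : A₀ * ((D : ℝ) / d) = ∑ m, A₀ * t m := by
        rw [← Finset.mul_sum, hsum_t]
      rw [this]
      apply mul_le_mul_of_nonneg_left _ hc.le
      exact Finset.sum_le_sum fun m _ => mul_le_mul_of_nonneg_right (ha_lb m) (ht0 m)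
    · rw [htr, hB_def]
      have : Real.exp δ * (c * (A₀ * ((D : ℝ) / d))) = c * ∑ m, (Real.exp δ * A₀) * t m := by
        rw [← Finset.mul_sum, hsum_t]
        ring
      rw [this]
      apply mul_le_mul_of_nonneg_left _ hc.le
      exact Finset.sum_le_sum fun m _ => mul_le_mul_of_nonneg_right (ha_ub m) (ht0 m)
  -- Hermitian
  have hherm : (noisyPOVMElement v δ z).IsHermitian := by
    unfold noisyPOVMElement Matrix.IsHermitian
    simp only [Matrix.conjTranspose_smul, Matrix.conjTranspose_sum, conjTranspose_vecMulVec_star,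
      Complex.star_def, Complex.conj_ofReal]
  refine ⟨⟨hherm, ?_⟩, ?_⟩
  · -- eigenvalue bounds
    have heig : ∀ i, B ≤ hherm.eigenvalues i ∧ hherm.eigenvalues i ≤ Real.exp δ * B := by
      intro i
      set u : Fin d → ℂ := ⇑(hherm.eigenvectorBasis i) with hu_def
      have hu1 : star u ⬝ᵥ u = 1 := by
        have h := hherm.eigenvectorBasis.orthonormal.1 i
        have h2 : (inner ℂ (hherm.eigenvectorBasis i) (hherm.eigenvectorBasis i) : ℂ) = 1 := by
          rw [inner_self_eq_norm_sq_to_K, h]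
          norm_num
        rw [EuclideanSpace.inner_eq_star_dotProduct, dotProduct_comm] at h2
        exact h2
      have hρ : (Matrix.vecMulVec u (star u)).PosSemidef := posSemidef_vecMulVec_star u
      have hρtr : (Matrix.vecMulVec u (star u)).trace = 1 := by
        rw [trace_vecMulVec_star, hu1]
      have hk := key _ hρ hρtr
      have heq : (Matrix.vecMulVec u (star u) * noisyPOVMElement v δ z).trace.re
          = hherm.eigenvalues i := by
        rw [Matrix.trace_mul_comm, trace_mul_vecMulVec']
        rw [hherm.eigenvalues_eq i]
        rfl
      rw [heq] at hk
      exact hk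
    have hne : Nonempty (Fin d) := ⟨⟨0, hd⟩⟩
    calc (⨆ i, hherm.eigenvalues i) ≤ Real.exp δ * B :=
          ciSup_le fun i => (heig i).2
      _ ≤ Real.exp δ * ⨅ i, hherm.eigenvalues i := by
          apply mul_le_mul_of_nonneg_left _ (Real.exp_pos δ).le
          exact le_ciInf fun i => (heig i).1
  · intro ρ σ hρ hρtr hσ hσtr
    calc (ρ * noisyPOVMElement v δ z).trace.re ≤ Real.exp δ * B := (key ρ hρ hρtr).2
      _ ≤ Real.exp δ * (σ * noisyPOVMElement v δ z).trace.re :=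
          mul_le_mul_of_nonneg_left (key σ hσ hσtr).1 (Real.exp_pos δ).le
end

section
/- Let (E_y)_{y∈Y} be positive semidefinite Hermitian d×d matrices with positive traces, Σ_y E_y = 1, and suppose λ_max(E_y) ≤ e^δ λ_min(E_y) with λ_min(E_y) > 0 for all y. Let H(A) = Σ_y (Tr[A E_y]/Tr[E_y]) E_y. Then the sum of the eigenvalues of H restricted to the orthogonal complement of the identity (i.e. Tr[H] − 1, where the trace is the super-operator trace on ℂ^{d×d}) is at most (e^δ − 1)². -/
open Matrix BigOperators ComplexOrder

/-- The super-operator H(A) = Σ_y (Tr[A E_y]/Tr[E_y]) E_y. -/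
noncomputable def superOpH {d : ℕ} {Y : Type*} [Fintype Y]
    (E : Y → Matrix (Fin d) (Fin d) ℂ) (A : Matrix (Fin d) (Fin d) ℂ) :
    Matrix (Fin d) (Fin d) ℂ :=
  ∑ y, ((A * E y).trace / (E y).trace) • E y

/-- The super-operator trace of H, computed in the orthonormal basis of matrix
units for the Hilbert–Schmidt inner product. -/
noncomputable def superOpTrace {d : ℕ} {Y : Type*} [Fintype Y]
    (E : Y → Matrix (Fin d) (Fin d) ℂ) : ℂ :=
  ∑ i : Fin d, ∑ j : Fin d,
    ((Matrix.single i j (1 : ℂ))ᴴ *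
      superOpH E (Matrix.single i j (1 : ℂ))).trace

/-- The super-operator trace equals `Σ_y Tr[E_y²]/Tr[E_y]`. -/
lemma superOpTrace_eq {d : ℕ} {Y : Type*} [Fintype Y] (E : Y → Matrix (Fin d) (Fin d) ℂ) :
    superOpTrace E = ∑ y, (E y * E y).trace / (E y).trace := by
  have hconj : ∀ i j : Fin d, (Matrix.single i j (1:ℂ))ᴴ = Matrix.single j i 1 := by
    intro i j; ext a b; simp [Matrix.single, conjTranspose_apply, and_comm]
  have htr : ∀ (i j : Fin d) (M : Matrix (Fin d) (Fin d) ℂ),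
      (Matrix.single i j (1:ℂ) * M).trace = M j i := by
    intro i j M
    simp [Matrix.trace, Matrix.diag, Matrix.mul_apply, Matrix.single, ite_and]
  unfold superOpTrace superOpH
  simp only [Matrix.mul_sum, Matrix.mul_smul, Matrix.trace_sum, Matrix.trace_smul, hconj, htr,
    smul_eq_mul]
  trans ∑ y : Y, ∑ i : Fin d, ∑ j : Fin d, E y j i / (E y).trace * E y i j
  · trans ∑ i : Fin d, ∑ y : Y, ∑ j : Fin d, E y j i / (E y).trace * E y i j
    · exact Finset.sum_congr rfl fun i _ => Finset.sum_comm
    · exact Finset.sum_comm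
  · refine Finset.sum_congr rfl fun y _ => ?_
    rw [show (E y * E y).trace = ∑ i : Fin d, ∑ j : Fin d, E y i j * E y j i by
      simp [Matrix.trace, Matrix.diag, Matrix.mul_apply]]
    rw [Finset.sum_comm, Finset.sum_div]
    refine Finset.sum_congr rfl fun i _ => ?_
    rw [Finset.sum_div]
    exact Finset.sum_congr rfl fun j _ => by ring

/-- Trace of a Hermitian matrix is the sum of its eigenvalues. -/
lemma trace_eq_sum_eig {d : ℕ} (A : Matrix (Fin d) (Fin d) ℂ) (hA : A.IsHermitian) :
    A.trace = ∑ i, (hA.eigenvalues i : ℂ) := by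
  nth_rewrite 1 [hA.spectral_theorem]
  rw [Unitary.conjStarAlgAut_apply, trace_mul_cycle]
  simp [Matrix.trace_diagonal, (Matrix.mem_unitaryGroup_iff'.mp (hA.eigenvectorUnitary).2)]

/-- Trace of the square of a Hermitian matrix is the sum of the squares of its eigenvalues. -/
lemma trace_sq_eq_sum_eig_sq {d : ℕ} (A : Matrix (Fin d) (Fin d) ℂ) (hA : A.IsHermitian) :
    (A * A).trace = ∑ i, ((hA.eigenvalues i : ℂ))^2 := by
  have h := hA.spectral_theorem
  rw [Unitary.conjStarAlgAut_apply] at h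
  set U : Matrix (Fin d) (Fin d) ℂ := ↑hA.eigenvectorUnitary with hU
  set D : Matrix (Fin d) (Fin d) ℂ := diagonal (RCLike.ofReal ∘ hA.eigenvalues) with hD
  have hUU : star U * U = 1 := Matrix.mem_unitaryGroup_iff'.mp (hA.eigenvectorUnitary).2
  calc (A * A).trace = ((U * D * star U) * (U * D * star U)).trace := by rw [← h]
    _ = (star U * (U * D * star U * (U * D))).trace := by rw [← trace_mul_cycle]; noncomm_ring
    _ = (star U * U * D * (star U * U) * D).trace := by noncomm_ring
    _ = (D * D).trace := by rw [hUU]; simp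
    _ = ∑ i, ((hA.eigenvalues i : ℂ))^2 := by
        simp [hD, diagonal_mul_diagonal, Matrix.trace_diagonal, sq]

/-- The core real-number inequality. -/
lemma core_ineq {d : ℕ} (hd : 0 < d) (μ : Fin d → ℝ) (x lam t : ℝ)
    (hx : 1 ≤ x) (ht : 0 < t) (htdef : t = ∑ i, μ i)
    (hlo : ∀ i, lam ≤ μ i) (hhi : ∀ i, μ i ≤ x * lam) :
    (∑ i, (μ i)^2) / t ≤ (1+x)^2 / (4*x*(d:ℝ)) * t := by
  have hd' : (0:ℝ) < d := by exact_mod_cast hd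
  have hx0 : (0:ℝ) < x := by linarith
  have key : ∑ i, (μ i)^2 ≤ (1+x)*lam*t - x*lam^2*d := by
    have h1 : (0:ℝ) ≤ ∑ i, (μ i - lam)*(x*lam - μ i) :=
      Finset.sum_nonneg fun i _ => mul_nonneg (by linarith [hlo i]) (by linarith [hhi i])
    have h2 : ∑ i, (μ i - lam)*(x*lam - μ i)
        = (1+x)*lam*t - (∑ i, (μ i)^2) - x*lam^2*d := by
      have : ∀ i ∈ Finset.univ, (μ i - lam)*(x*lam - μ i)
          = (1+x)*lam*μ i - (μ i)^2 - x*lam^2 := fun i _ => by ring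
      rw [Finset.sum_congr rfl this, Finset.sum_sub_distrib, Finset.sum_sub_distrib,
        ← Finset.mul_sum, Finset.sum_const, Finset.card_univ, Fintype.card_fin, ← htdef]
      ring
    linarith [h2 ▸ h1]
  rw [div_le_iff₀ ht]
  have h3 : (1+x)*lam*t - x*lam^2*d ≤ (1+x)^2/(4*x*d) * t * t := by
    rw [← sub_nonneg]
    have h4 : (1+x)^2/(4*x*d) * t * t - ((1+x)*lam*t - x*lam^2*d)
        = ((1+x)*t - 2*x*lam*d)^2 / (4*x*d) := by field_simp; ring
    rw [h4]; positivity
  linarith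

/-- For a δ-quantum-differentially-private POVM (E_y), the sum of the
eigenvalues of H on the orthogonal complement of the identity, i.e. Tr[H] − 1, is
at most (e^δ − 1)². -/
theorem superOpH_trace_bound
    {d : ℕ} (hd : 0 < d) {Y : Type*} [Fintype Y]
    (E : Y → Matrix (Fin d) (Fin d) ℂ)
    (hpsd : ∀ y, (E y).PosSemidef) (htr : ∀ y, 0 < ((E y).trace).re)
    (hsum : ∑ y, E y = 1)
    (δ : ℝ)
    (hmin : ∀ y, 0 < ⨅ i, (hpsd y).1.eigenvalues i)
    (hdp : ∀ y, (⨆ i, (hpsd y).1.eigenvalues i) ≤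
        Real.exp δ * ⨅ i, (hpsd y).1.eigenvalues i) :
    (superOpTrace E).re - 1 ≤ (Real.exp δ - 1) ^ 2 := by
  haveI : Nonempty (Fin d) := ⟨⟨0, hd⟩⟩
  set x := Real.exp δ with hxdef
  have hd' : (0:ℝ) < d := by exact_mod_cast hd
  -- eigenvalue data for each y
  set μ : Y → Fin d → ℝ := fun y => (hpsd y).1.eigenvalues with hμ
  set lam : Y → ℝ := fun y => ⨅ i, μ y i with hlam
  have hbddB : ∀ y, BddBelow (Set.range (μ y)) := fun y => (Set.finite_range _).bddBelow
  have hbddA : ∀ y, BddAbove (Set.range (μ y)) := fun y => (Set.finite_range _).bddAbove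
  have hlo : ∀ y i, lam y ≤ μ y i := fun y i => ciInf_le (hbddB y) i
  have hhi : ∀ y i, μ y i ≤ x * lam y :=
    fun y i => le_trans (le_ciSup (hbddA y) i) (hdp y)
  have hY : Nonempty Y := by
    by_contra h
    rw [not_nonempty_iff] at h
    have h0 : (∑ y : Y, E y) ⟨0, hd⟩ ⟨0, hd⟩ = (1 : Matrix (Fin d) (Fin d) ℂ) ⟨0, hd⟩ ⟨0, hd⟩ := by
      rw [hsum]
    simp [Matrix.one_apply] at h0
  obtain ⟨y0⟩ := hY
  have hx : 1 ≤ x := by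
    obtain ⟨i⟩ := (inferInstance : Nonempty (Fin d))
    have h1 := hlo y0 i
    have h2 := hhi y0 i
    have h3 := hmin y0
    nlinarith
  have hx0 : (0:ℝ) < x := Real.exp_pos δ
  -- traces
  set t : Y → ℝ := fun y => ∑ i, μ y i with ht
  have htrace : ∀ y, (E y).trace = ((t y : ℝ) : ℂ) := by
    intro y
    rw [trace_eq_sum_eig _ (hpsd y).1]
    push_cast [ht]
    rfl
  have htpos : ∀ y, 0 < t y := by
    intro y
    have := htr y
    rw [htrace y] at this
    simpa using this
  set s : Y → ℝ := fun y => ∑ i, (μ y i)^2 with hs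
  have htrace2 : ∀ y, (E y * E y).trace = ((s y : ℝ) : ℂ) := by
    intro y
    rw [trace_sq_eq_sum_eig_sq _ (hpsd y).1]
    push_cast [hs]
    rfl
  -- re of superOpTrace
  have hre : (superOpTrace E).re = ∑ y, s y / t y := by
    rw [superOpTrace_eq, Complex.re_sum]
    refine Finset.sum_congr rfl fun y _ => ?_
    rw [htrace y, htrace2 y, ← Complex.ofReal_div, Complex.ofReal_re]
  -- sum of traces is d
  have hsumt : ∑ y, t y = (d : ℝ) := by
    have h1 : ∑ y, (E y).trace = (d : ℂ) := by
      rw [← Matrix.trace_sum, hsum, Matrix.trace_one]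
      simp
    have h2 : ((∑ y, t y : ℝ) : ℂ) = (d : ℂ) := by
      push_cast [← h1]
      exact Finset.sum_congr rfl fun y _ => (htrace y).symm
    exact_mod_cast h2
  -- main estimate
  have hmain : ∑ y, s y / t y ≤ (1+x)^2 / (4*x) := by
    calc ∑ y, s y / t y ≤ ∑ y, (1+x)^2 / (4*x*(d:ℝ)) * t y :=
          Finset.sum_le_sum fun y _ =>
            core_ineq hd (μ y) x (lam y) (t y) hx (htpos y) rfl (hlo y) (hhi y)
      _ = (1+x)^2 / (4*x*(d:ℝ)) * ∑ y, t y := by rw [Finset.mul_sum]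
      _ = (1+x)^2 / (4*x) := by rw [hsumt]; field_simp
  have hfinal : (1+x)^2 / (4*x) - 1 ≤ (x - 1)^2 := by
    rw [div_sub' (by positivity), div_le_iff₀ (by positivity)]
    nlinarith [mul_nonneg (sq_nonneg (x-1)) (by linarith : (0:ℝ) ≤ 4*x - 1)]
  rw [hre] at *
  linarith
end

section
/- Let P = P⁽¹⁾⊗...⊗P⁽ⁿ⁾ and, for each parameter ν in a finite set V with a probability distribution, Q_ν = Q_ν⁽¹⁾⊗...⊗Q_ν⁽ⁿ⁾ be product probability distributions on a finite product space, mutually absolutely continuous with P. Then the chi-squared divergence of the mixture satisfies d_{χ²}(E_ν[Q_ν], P) = E_{ν₁,ν₂}[∏_{i=1}^n (1 + H_i(ν₁,ν₂))] − 1, where ν₁, ν₂ are i.i.d. copies of ν, H_i(ν₁,ν₂) = E_{y∼P⁽ⁱ⁾}[δ_{ν₁}⁽ⁱ⁾(y) δ_{ν₂}⁽ⁱ⁾(y)], and δ_ν⁽ⁱ⁾(y) = (q_ν⁽ⁱ⁾(y) − p⁽ⁱ⁾(y))/p⁽ⁱ⁾(y). -/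
open BigOperators

/-- Decoupled chi-squared fluctuation (Lemma 8 of Acharya et al.):
for product distributions P = ⊗ P⁽ⁱ⁾ and a mixture of product distributions
Q_ν = ⊗ Q_ν⁽ⁱ⁾ over a random parameter ν,
d_{χ²}(E_ν[Q_ν], P) = E_{ν₁,ν₂}[∏ᵢ (1 + Hᵢ(ν₁,ν₂))] − 1. -/
theorem chi_squared_decoupled_fluctuation
    {n : ℕ} (Y : Fin n → Type*) [∀ i, Fintype (Y i)]
    {V : Type*} [Fintype V]
    (p : ∀ i, Y i → ℝ) (hp : ∀ i y, 0 < p i y) (hp1 : ∀ i, ∑ y, p i y = 1)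
    (q : V → ∀ i, Y i → ℝ) (hq : ∀ ν i y, 0 < q ν i y)
    (hq1 : ∀ ν i, ∑ y, q ν i y = 1)
    (π : V → ℝ) (hπ : ∀ ν, 0 ≤ π ν) (hπ1 : ∑ ν, π ν = 1) :
    (∑ y : ∀ i, Y i,
        (∑ ν, π ν * ∏ i, q ν i (y i)) ^ 2 / ∏ i, p i (y i)) - 1 =
      (∑ ν₁, ∑ ν₂, π ν₁ * π ν₂ *
        ∏ i, (1 + ∑ y : Y i, p i y *
          ((q ν₁ i y - p i y) / p i y) * ((q ν₂ i y - p i y) / p i y))) - 1 := by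
  congr 1
  have hH : ∀ ν₁ ν₂ i, (1 + ∑ y : Y i, p i y *
      ((q ν₁ i y - p i y) / p i y) * ((q ν₂ i y - p i y) / p i y))
      = ∑ y : Y i, q ν₁ i y * q ν₂ i y / p i y := by
    intro ν₁ ν₂ i
    have h : ∀ y : Y i, p i y * ((q ν₁ i y - p i y) / p i y) * ((q ν₂ i y - p i y) / p i y)
        = q ν₁ i y * q ν₂ i y / p i y - q ν₁ i y - q ν₂ i y + p i y := by
      intro y
      have := (hp i y).ne'
      field_simp
      ring
    simp only [h, Finset.sum_add_distrib, Finset.sum_sub_distrib, hp1, hq1]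
    ring
  have hkey : ∀ ν₁ ν₂ : V, (∏ i, ∑ y : Y i, q ν₁ i y * q ν₂ i y / p i y)
      = ∑ y : ∀ i, Y i, (∏ i, q ν₁ i (y i)) * (∏ i, q ν₂ i (y i)) / ∏ i, p i (y i) := by
    intro ν₁ ν₂
    rw [Finset.prod_univ_sum, ← Fintype.piFinset_univ]
    refine Finset.sum_congr rfl fun y _ => ?_
    rw [Finset.prod_div_distrib, Finset.prod_mul_distrib]
  simp only [hH, hkey]
  have hy : ∀ y : ∀ i, Y i, (∑ ν, π ν * ∏ i, q ν i (y i)) ^ 2 / ∏ i, p i (y i)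
      = ∑ ν₁, ∑ ν₂, π ν₁ * π ν₂ *
        ((∏ i, q ν₁ i (y i)) * (∏ i, q ν₂ i (y i)) / ∏ i, p i (y i)) := by
    intro y
    rw [sq, Finset.sum_mul_sum, Finset.sum_div]
    refine Finset.sum_congr rfl fun ν₁ _ => ?_
    rw [Finset.sum_div]
    refine Finset.sum_congr rfl fun ν₂ _ => ?_
    ring
  simp only [hy, Finset.mul_sum]
  rw [Finset.sum_comm]
  exact Finset.sum_congr rfl fun ν₁ _ => Finset.sum_comm
end
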